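/- Let k ≥ 3 with k ≠ 4, n ≥ 3k (and n ≥ 18 if k=3). Every k-detectable hypergraph on n vertices with all hyperedges of cardinality at most k and no repeated hyperedges has at least n/2 + n/k hyperedges. -/

import Mathlib

/-- The Kneser graph `K(k,n)`: vertices are the `k`-subsets of `[n]`,
adjacent iff disjoint. -/
def Kneser (k n : ℕ) : SimpleGraph {s : Finset (Fin n) // s.card = k} :=
  SimpleGraph.fromRel (fun u v => Disjoint u.1 v.1)

/-- `S` is a resolving set of `G`. -/
def IsResolvingSet {V : Type*} (G : SimpleGraph V) (S : Set V) : Prop :=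
  ∀ u v : V, (∀ s ∈ S, G.dist s u = G.dist s v) → u = v

def detVal {V : Type*} [DecidableEq V] (k : ℕ) (h B : Finset V) : ℕ :=
  if (h ∩ B).card = 0 then 0 else if (h ∩ B).card = k then k else 1

def Detectable {V : Type*} [DecidableEq V] (k k' : ℕ) (E : Finset (Finset V)) : Prop :=
  ∀ B₁ B₂ : Finset V, B₁.card = k' → B₂.card = k' →
    (∀ h ∈ E, detVal k h B₁ = detVal k h B₂) → B₁ = B₂

def hdeg {V : Type*} [DecidableEq V] (E : Finset (Finset V)) (v : V) : ℕ :=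
  (E.filter (fun h => v ∈ h)).card

namespace Stmt5

variable {n k : ℕ}

/-- weight of a vertex: sum of 1/|h| over edges containing it -/
noncomputable def sig (E : Finset (Finset (Fin n))) (v : Fin n) : ℚ :=
  ∑ h ∈ E.filter (fun h => v ∈ h), (1 : ℚ) / h.card

lemma sum_sig (E : Finset (Finset (Fin n))) (hne : ∀ h ∈ E, h.Nonempty) :
    ∑ v, sig E v = E.card := by
  unfold sig
  have : ∀ v : Fin n, ∑ h ∈ E.filter (fun h => v ∈ h), (1 : ℚ) / h.card
      = ∑ h ∈ E, if v ∈ h then (1 : ℚ) / h.card else 0 := by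
    intro v; rw [Finset.sum_filter]
  simp_rw [this]
  rw [Finset.sum_comm]
  have h2 : ∀ h ∈ E, (∑ v : Fin n, if v ∈ h then (1 : ℚ) / h.card else 0) = 1 := by
    intro h hh
    have hpos : 0 < h.card := Finset.card_pos.2 (hne h hh)
    have e : ∑ v : Fin n, (if v ∈ h then (1 : ℚ) / h.card else 0)
        = ∑ v ∈ h, (1 : ℚ) / h.card := by
      rw [Finset.sum_ite_mem, Finset.univ_inter]
    rw [e, Finset.sum_const, nsmul_eq_mul]
    field_simp
  rw [Finset.sum_congr rfl h2, Finset.sum_const, nsmul_eq_mul, mul_one]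

/-- the "cores" of edges containing exactly one of u, v -/
def cores (E : Finset (Finset (Fin n))) (u v : Fin n) : Finset (Finset (Fin n)) :=
  ((E.filter (fun h => u ∈ h ∧ v ∉ h)).image (fun h => h.erase u)) ∪
  ((E.filter (fun h => v ∈ h ∧ u ∉ h)).image (fun h => h.erase v))

lemma mem_cores_iff {E : Finset (Finset (Fin n))} {u v : Fin n} {c : Finset (Fin n)} :
    c ∈ cores E u v ↔ (∃ h ∈ E, u ∈ h ∧ v ∉ h ∧ h.erase u = c) ∨
      (∃ h ∈ E, v ∈ h ∧ u ∉ h ∧ h.erase v = c) := by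
  unfold cores
  simp only [Finset.mem_union, Finset.mem_image, Finset.mem_filter]
  constructor
  · rintro (⟨h, ⟨h1, h2, h3⟩, h4⟩ | ⟨h, ⟨h1, h2, h3⟩, h4⟩)
    · exact Or.inl ⟨h, h1, h2, h3, h4⟩
    · exact Or.inr ⟨h, h1, h2, h3, h4⟩
  · rintro (⟨h, h1, h2, h3, h4⟩ | ⟨h, h1, h2, h3, h4⟩)
    · exact Or.inl ⟨h, ⟨h1, h2, h3⟩, h4⟩
    · exact Or.inr ⟨h, ⟨h1, h2, h3⟩, h4⟩

lemma cores_not_mem_u {E : Finset (Finset (Fin n))} {u v : Fin n} {c : Finset (Fin n)}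
    (hc : c ∈ cores E u v) : u ∉ c ∧ v ∉ c := by
  rw [mem_cores_iff] at hc
  rcases hc with ⟨h, _, _, hv, rfl⟩ | ⟨h, _, _, hu, rfl⟩
  · exact ⟨Finset.notMem_erase _ _, fun hvv => hv (Finset.mem_of_mem_erase hvv)⟩
  · exact ⟨fun huu => hu (Finset.mem_of_mem_erase huu), Finset.notMem_erase _ _⟩

lemma cores_card_le {E : Finset (Finset (Fin n))} {u v : Fin n} {c : Finset (Fin n)}
    (hcardle : ∀ h ∈ E, h.card ≤ k) (hc : c ∈ cores E u v) : c.card ≤ k - 1 := by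
  rw [mem_cores_iff] at hc
  rcases hc with ⟨h, hE, hu, _, rfl⟩ | ⟨h, hE, hv, _, rfl⟩
  · rw [Finset.card_erase_of_mem hu]; exact Nat.sub_le_sub_right (hcardle h hE) 1
  · rw [Finset.card_erase_of_mem hv]; exact Nat.sub_le_sub_right (hcardle h hE) 1

/-- THE SWAP LEMMA -/
lemma swap_lemma (hk : 3 ≤ k) {E : Finset (Finset (Fin n))}
    (hcardle : ∀ h ∈ E, h.card ≤ k) (hdet : Detectable k k E)
    {u v : Fin n} (huv : u ≠ v) {S : Finset (Fin n)} (hS : S.card = k - 1)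
    (huS : u ∉ S) (hvS : v ∉ S) :
    ∃ c ∈ cores E u v, c ∩ S = ∅ ∨ c = S := by
  by_contra hcon
  push_neg at hcon
  have key : ∀ h ∈ E, detVal k h (insert u S) = detVal k h (insert v S) := by
    intro h hh
    by_cases hu : u ∈ h <;> by_cases hv : v ∈ h
    · -- both
      have e1 : h ∩ insert u S = insert u (h ∩ S) := by
        rw [Finset.inter_comm, Finset.insert_inter_of_mem hu, Finset.inter_comm]
      have e2 : h ∩ insert v S = insert v (h ∩ S) := by
        rw [Finset.inter_comm, Finset.insert_inter_of_mem hv, Finset.inter_comm]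
      have c1 : (h ∩ insert u S).card = (h ∩ S).card + 1 := by
        rw [e1, Finset.card_insert_of_notMem (fun hx => huS (Finset.mem_inter.1 hx).2)]
      have c2 : (h ∩ insert v S).card = (h ∩ S).card + 1 := by
        rw [e2, Finset.card_insert_of_notMem (fun hx => hvS (Finset.mem_inter.1 hx).2)]
      unfold detVal; rw [c1, c2]
    · -- u ∈ h, v ∉ h
      set c := h.erase u with hcdef
      have hcmem : c ∈ cores E u v := by
        rw [mem_cores_iff]; exact Or.inl ⟨h, hh, hu, hv, rfl⟩
      obtain ⟨hne', hneq⟩ := hcon c hcmem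
      have hcS : c ∩ S = h ∩ S := by
        ext x; simp only [hcdef, Finset.mem_inter, Finset.mem_erase]
        constructor
        · rintro ⟨⟨_, hx⟩, hxS⟩; exact ⟨hx, hxS⟩
        · rintro ⟨hx, hxS⟩; exact ⟨⟨fun hxu => huS (hxu ▸ hxS), hx⟩, hxS⟩
      have hcSne : (c ∩ S).Nonempty := hne'
      have c1 : (h ∩ insert u S).card = (c ∩ S).card + 1 := by
        have e1 : h ∩ insert u S = insert u (h ∩ S) := by
          rw [Finset.inter_comm, Finset.insert_inter_of_mem hu, Finset.inter_comm]
        rw [e1, hcS, Finset.card_insert_of_notMem (fun hx => huS (Finset.mem_inter.1 hx).2)]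
      have c2 : h ∩ insert v S = c ∩ S := by
        rw [Finset.inter_comm, Finset.insert_inter_of_notMem hv, Finset.inter_comm, hcS]
      have hne0 : (c ∩ S).card ≠ 0 := by
        exact Finset.card_ne_zero.2 hne'
      have hnotk1 : (c ∩ S).card + 1 ≠ k := by
        intro hcard
        -- then h ⊆ insert u S and |h| = k, so c = S
        have h1 : (h ∩ insert u S).card = k := by rw [c1, hcard]
        have hsub : h ∩ insert u S = h := by
          apply Finset.eq_of_subset_of_card_le Finset.inter_subset_left
          rw [h1]; exact hcardle h hh
        have hhsub : h ⊆ insert u S := by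
          intro x hx
          have hx2 : x ∈ h ∩ insert u S := by rw [hsub]; exact hx
          exact (Finset.mem_inter.1 hx2).2
        have hcsub : c ⊆ S := by
          intro x hx
          have hxh : x ∈ h := Finset.mem_of_mem_erase hx
          have hxu : x ≠ u := (Finset.mem_erase.1 hx).1
          rcases Finset.mem_insert.1 (hhsub hxh) with h' | h'
          · exact absurd h' hxu
          · exact h'
        apply hneq
        apply Finset.eq_of_subset_of_card_le hcsub
        have hck : c.card = k - 1 := by
          rw [hcdef, Finset.card_erase_of_mem hu]
          have : h.card = k := by
            have := Finset.card_le_card hhsub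
            have h2 := hcardle h hh
            have h3 : (insert u S).card ≤ k := by
              apply le_trans (Finset.card_insert_le _ _); rw [hS]; omega
            have h4 : (h ∩ insert u S).card ≤ h.card := Finset.card_le_card Finset.inter_subset_left
            omega
          omega
        rw [hS, hck]
      have hnotk2 : (c ∩ S).card ≠ k := by
        have : (c ∩ S).card ≤ c.card := Finset.card_le_card Finset.inter_subset_left
        have h2 : c.card ≤ k - 1 := cores_card_le hcardle hcmem
        omega
      unfold detVal
      rw [c1, c2]
      rw [if_neg (by omega), if_neg hnotk1, if_neg hne0, if_neg hnotk2]
    · -- v ∈ h, u ∉ h : symmetric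
      set c := h.erase v with hcdef
      have hcmem : c ∈ cores E u v := by
        rw [mem_cores_iff]; exact Or.inr ⟨h, hh, hv, hu, rfl⟩
      obtain ⟨hne', hneq⟩ := hcon c hcmem
      have hcS : c ∩ S = h ∩ S := by
        ext x; simp only [hcdef, Finset.mem_inter, Finset.mem_erase]
        constructor
        · rintro ⟨⟨_, hx⟩, hxS⟩; exact ⟨hx, hxS⟩
        · rintro ⟨hx, hxS⟩; exact ⟨⟨fun hxv => hvS (hxv ▸ hxS), hx⟩, hxS⟩
      have hcSne : (c ∩ S).Nonempty := hne'
      have c1 : (h ∩ insert v S).card = (c ∩ S).card + 1 := by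
        have e1 : h ∩ insert v S = insert v (h ∩ S) := by
          rw [Finset.inter_comm, Finset.insert_inter_of_mem hv, Finset.inter_comm]
        rw [e1, hcS, Finset.card_insert_of_notMem (fun hx => hvS (Finset.mem_inter.1 hx).2)]
      have c2 : h ∩ insert u S = c ∩ S := by
        rw [Finset.inter_comm, Finset.insert_inter_of_notMem hu, Finset.inter_comm, hcS]
      have hne0 : (c ∩ S).card ≠ 0 := by
        exact Finset.card_ne_zero.2 hne'
      have hnotk1 : (c ∩ S).card + 1 ≠ k := by
        intro hcard
        have h1 : (h ∩ insert v S).card = k := by rw [c1, hcard]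
        have hsub : h ∩ insert v S = h := by
          apply Finset.eq_of_subset_of_card_le Finset.inter_subset_left
          rw [h1]; exact hcardle h hh
        have hhsub : h ⊆ insert v S := by
          intro x hx
          have hx2 : x ∈ h ∩ insert v S := by rw [hsub]; exact hx
          exact (Finset.mem_inter.1 hx2).2
        have hcsub : c ⊆ S := by
          intro x hx
          have hxh : x ∈ h := Finset.mem_of_mem_erase hx
          have hxv : x ≠ v := (Finset.mem_erase.1 hx).1
          rcases Finset.mem_insert.1 (hhsub hxh) with h' | h'
          · exact absurd h' hxv
          · exact h'
        apply hneq
        apply Finset.eq_of_subset_of_card_le hcsub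
        have hck : c.card = k - 1 := by
          rw [hcdef, Finset.card_erase_of_mem hv]
          have : h.card = k := by
            have h2 := hcardle h hh
            have h4 : (h ∩ insert v S).card ≤ h.card := Finset.card_le_card Finset.inter_subset_left
            omega
          omega
        rw [hS, hck]
      have hnotk2 : (c ∩ S).card ≠ k := by
        have : (c ∩ S).card ≤ c.card := Finset.card_le_card Finset.inter_subset_left
        have h2 : c.card ≤ k - 1 := cores_card_le hcardle hcmem
        omega
      unfold detVal
      rw [c1, c2]
      rw [if_neg hne0, if_neg hnotk2, if_neg (by omega), if_neg hnotk1]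
    · -- neither
      have e1 : h ∩ insert u S = h ∩ S := by
        rw [Finset.inter_comm, Finset.insert_inter_of_notMem hu, Finset.inter_comm]
      have e2 : h ∩ insert v S = h ∩ S := by
        rw [Finset.inter_comm, Finset.insert_inter_of_notMem hv, Finset.inter_comm]
      unfold detVal; rw [e1, e2]
  have hc1 : (insert u S).card = k := by
    rw [Finset.card_insert_of_notMem huS, hS]; omega
  have hc2 : (insert v S).card = k := by
    rw [Finset.card_insert_of_notMem hvS, hS]; omega
  have := hdet _ _ hc1 hc2 key
  have : u ∈ insert v S := this ▸ Finset.mem_insert_self u S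
  rcases Finset.mem_insert.1 this with h' | h'
  · exact huv h'
  · exact huS h'


noncomputable def rep (h0 : 0 < n) (c : Finset (Fin n)) : Fin n :=
  if h : c.Nonempty then c.min' h else ⟨0, h0⟩

lemma rep_mem (h0 : 0 < n) {c : Finset (Fin n)} (hc : c.Nonempty) : rep h0 c ∈ c := by
  unfold rep; rw [dif_pos hc]; exact c.min'_mem hc

/-- The padding/blocking lemma: a small hitting set for the cores yields a contradiction. -/
lemma block (hk : 3 ≤ k) (hn : 3 * k ≤ n) {E : Finset (Finset (Fin n))}
    (hcardle : ∀ h ∈ E, h.card ≤ k) (hdet : Detectable k k E)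
    {u v : Fin n} (huv : u ≠ v) {T : Finset (Fin n)}
    (hTcard : T.card ≤ k - 2) (huT : u ∉ T) (hvT : v ∉ T)
    (hCcard : (cores E u v).card ≤ 2 * k - 2)
    (hhits : ∀ c ∈ cores E u v, (c ∩ T).Nonempty) : False := by
  have h0 : 0 < n := by omega
  set C := cores E u v with hC
  -- extend T to T' of card k-2 avoiding u,v
  have hsub : T ⊆ Finset.univ \ {u, v} := by
    intro x hx
    simp only [Finset.mem_sdiff, Finset.mem_univ, true_and, Finset.mem_insert,
      Finset.mem_singleton]
    push_neg
    constructor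
    · rintro rfl; exact huT hx
    · rintro rfl; exact hvT hx
  have hcard2 : k - 2 ≤ (Finset.univ \ {u, v} : Finset (Fin n)).card := by
    rw [Finset.card_sdiff_of_subset (by intro x hx; exact Finset.mem_univ x)]
    have : ({u, v} : Finset (Fin n)).card ≤ 2 := Finset.card_le_two
    simp only [Finset.card_univ, Fintype.card_fin]
    omega
  obtain ⟨T', hTT', hT'sub, hT'card⟩ :=
    Finset.exists_subsuperset_card_eq hsub hTcard hcard2
  -- the bad set
  set X := Finset.univ.filter (fun x => insert x T' ∈ C) with hX
  have hXcard : (X \ T').card ≤ C.card := by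
    apply Finset.card_le_card_of_injOn (fun x => insert x T')
    · intro x hx
      have hx' : x ∈ X \ T' := by simpa using hx
      exact Finset.mem_coe.2 (Finset.mem_filter.1 (Finset.mem_sdiff.1 hx').1).2
    · intro x hx y hy hxy
      have hx' : x ∈ X \ T' := by simpa using hx
      have hxy' : insert x T' = insert y T' := hxy
      by_contra hne
      have hxm : x ∈ insert y T' := hxy' ▸ Finset.mem_insert_self x T'
      rcases Finset.mem_insert.1 hxm with h' | h'
      · exact hne h'
      · exact (Finset.mem_sdiff.1 hx').2 h'
  -- choose a fresh pad
  have hbig : (T' ∪ {u, v} ∪ (X \ T')).card < n := by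
    have h1 : (T' ∪ {u, v} ∪ (X \ T')).card ≤ (k - 2) + 2 + (2 * k - 2) := by
      calc (T' ∪ {u, v} ∪ (X \ T')).card ≤ (T' ∪ {u, v}).card + (X \ T').card :=
            Finset.card_union_le _ _
        _ ≤ T'.card + ({u, v} : Finset (Fin n)).card + (X \ T').card := by
            have := Finset.card_union_le T' ({u, v} : Finset (Fin n))
            omega
        _ ≤ (k - 2) + 2 + (2 * k - 2) := by
            have h2 : ({u, v} : Finset (Fin n)).card ≤ 2 := Finset.card_le_two
            omega
    omega
  obtain ⟨x, hx⟩ : ∃ x, x ∈ Finset.univ \ (T' ∪ {u, v} ∪ (X \ T')) := by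
    apply Finset.card_pos.1
    rw [Finset.card_sdiff_of_subset (Finset.subset_univ _)]
    simp only [Finset.card_univ, Fintype.card_fin]
    omega
  rw [Finset.mem_sdiff] at hx
  obtain ⟨-, hxnot⟩ := hx
  simp only [Finset.mem_union, Finset.mem_insert, Finset.mem_singleton, Finset.mem_sdiff,
    not_or, not_and, not_not] at hxnot
  obtain ⟨⟨hxT', hxu, hxv⟩, hxX⟩ := hxnot
  have hScard : (insert x T').card = k - 1 := by
    rw [Finset.card_insert_of_notMem hxT', hT'card]; omega
  have huS : u ∉ insert x T' := by
    intro h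
    rcases Finset.mem_insert.1 h with h' | h'
    · exact hxu h'.symm
    · have := hT'sub h'
      simp [Finset.mem_sdiff] at this
  have hvS : v ∉ insert x T' := by
    intro h
    rcases Finset.mem_insert.1 h with h' | h'
    · exact hxv h'.symm
    · have := hT'sub h'
      simp [Finset.mem_sdiff] at this
  obtain ⟨c, hcC, hcc⟩ := swap_lemma hk hcardle hdet huv hScard huS hvS
  rcases hcc with hemp | heq
  · obtain ⟨y, hy⟩ := hhits c hcC
    have : y ∈ c ∩ insert x T' := by
      simp only [Finset.mem_inter] at hy ⊢
      exact ⟨hy.1, Finset.mem_insert.2 (Or.inr (hTT' hy.2))⟩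
    rw [hemp] at this
    exact absurd this (Finset.notMem_empty y)
  · -- c = insert x T', so x ∈ X
    have : x ∈ X := by
      simp only [hX, Finset.mem_filter, Finset.mem_univ, true_and]
      rw [heq] at hcC; exact hcC
    exact hxT' (hxX this)

/-- The pair lemma : cores (all nonempty) number at least k. -/
lemma pair_lemma (hk : 3 ≤ k) (hn : 3 * k ≤ n) {E : Finset (Finset (Fin n))}
    (hcardle : ∀ h ∈ E, h.card ≤ k) (hdet : Detectable k k E)
    {u v : Fin n} (huv : u ≠ v) (hE0 : ∀ c ∈ cores E u v, c.Nonempty) :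
    k ≤ (cores E u v).card := by
  have h0 : 0 < n := by omega
  by_contra hcon
  push_neg at hcon
  have hC : (cores E u v).card ≤ k - 1 := by omega
  set C := cores E u v with hCdef
  have hC2 : (cores E u v).card ≤ 2 * k - 2 := by rw [← hCdef]; omega
  by_cases hover : ∃ c₁ ∈ C, ∃ c₂ ∈ C, c₁ ≠ c₂ ∧ (c₁ ∩ c₂).Nonempty
  · obtain ⟨c₁, hc₁, c₂, hc₂, hne12, x, hx⟩ := hover
    rw [Finset.mem_inter] at hx
    set T := insert x (((C.erase c₁).erase c₂).image (rep h0)) with hT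
    have hTcard : T.card ≤ k - 2 := by
      have h1 : ((C.erase c₁).erase c₂).card = C.card - 2 := by
        rw [Finset.card_erase_of_mem (Finset.mem_erase.2 ⟨hne12.symm, hc₂⟩),
          Finset.card_erase_of_mem hc₁]
        omega
      calc T.card ≤ (((C.erase c₁).erase c₂).image (rep h0)).card + 1 :=
            Finset.card_insert_le _ _
        _ ≤ ((C.erase c₁).erase c₂).card + 1 := by
            have := Finset.card_image_le (s := (C.erase c₁).erase c₂) (f := rep h0)
            omega
        _ ≤ k - 2 := by omega
    have hmemT : ∀ y ∈ T, ∃ c ∈ C, y ∈ c := by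
      intro y hy
      rcases Finset.mem_insert.1 hy with h' | h'
      · exact ⟨c₁, hc₁, h' ▸ hx.1⟩
      · obtain ⟨c, hcmem, rfl⟩ := Finset.mem_image.1 h'
        have hcC : c ∈ C := Finset.mem_of_mem_erase (Finset.mem_of_mem_erase hcmem)
        exact ⟨c, hcC, rep_mem h0 (hE0 c hcC)⟩
    have huT : u ∉ T := by
      intro h; obtain ⟨c, hc, hyc⟩ := hmemT u h
      exact (cores_not_mem_u hc).1 hyc
    have hvT : v ∉ T := by
      intro h; obtain ⟨c, hc, hyc⟩ := hmemT v h
      exact (cores_not_mem_u hc).2 hyc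
    refine block hk hn hcardle hdet huv hTcard huT hvT hC2 ?_
    intro c hc
    by_cases h1 : c = c₁
    · exact ⟨x, Finset.mem_inter.2 ⟨h1 ▸ hx.1, Finset.mem_insert_self x _⟩⟩
    by_cases h2 : c = c₂
    · exact ⟨x, Finset.mem_inter.2 ⟨h2 ▸ hx.2, Finset.mem_insert_self x _⟩⟩
    refine ⟨rep h0 c, Finset.mem_inter.2 ⟨rep_mem h0 (hE0 c hc), ?_⟩⟩
    rw [hT]
    apply Finset.mem_insert.2
    right
    exact Finset.mem_image_of_mem _ (Finset.mem_erase.2 ⟨h2, Finset.mem_erase.2 ⟨h1, hc⟩⟩)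
  · -- pairwise disjoint cores
    push_neg at hover
    have hdisj : ∀ c₁ ∈ C, ∀ c₂ ∈ C, c₁ ≠ c₂ → c₁ ∩ c₂ = ∅ := by
      intro c₁ h1 c₂ h2 hne
      by_contra hne'
      exact absurd (Finset.nonempty_iff_ne_empty.2 hne') (by
        intro hcc
        exact hne' (hover c₁ h1 c₂ h2 hne))
    set T := C.image (rep h0) with hT
    have hmemT : ∀ y ∈ T, ∃ c ∈ C, y ∈ c := by
      intro y hy
      obtain ⟨c, hcmem, rfl⟩ := Finset.mem_image.1 hy
      exact ⟨c, hcmem, rep_mem h0 (hE0 c hcmem)⟩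
    have huT : u ∉ T := by
      intro h; obtain ⟨c, hc, hyc⟩ := hmemT u h
      exact (cores_not_mem_u hc).1 hyc
    have hvT : v ∉ T := by
      intro h; obtain ⟨c, hc, hyc⟩ := hmemT v h
      exact (cores_not_mem_u hc).2 hyc
    have hhits : ∀ c ∈ C, (c ∩ T).Nonempty := by
      intro c hc
      exact ⟨rep h0 c, Finset.mem_inter.2 ⟨rep_mem h0 (hE0 c hc),
        Finset.mem_image_of_mem _ hc⟩⟩
    by_cases hTc : T.card ≤ k - 2
    · exact block hk hn hcardle hdet huv hTc huT hvT hC2 hhits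
    · have him := Finset.card_image_le (s := C) (f := rep h0)
      rw [← hT] at him
      have hTcard : T.card = k - 1 := by omega
      have hCcard : C.card = k - 1 := by omega
      obtain ⟨c, hcC, hcc⟩ := swap_lemma hk hcardle hdet huv hTcard huT hvT
      rcases hcc with hemp | heq
      · obtain ⟨y, hy⟩ := hhits c hcC
        rw [hemp] at hy
        exact absurd hy (Finset.notMem_empty y)
      · -- c = T : pick another core c'
        have h2 : 1 < C.card := by omega
        obtain ⟨a, ha, b, hb, hab⟩ := Finset.one_lt_card.1 h2
        have hex : ∃ c' ∈ C, c' ≠ c := by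
          by_cases hac : a = c
          · exact ⟨b, hb, fun h => hab (hac ▸ h ▸ rfl)⟩
          · exact ⟨a, ha, hac⟩
        obtain ⟨c', hc'C, hc'ne⟩ := hex
        have h3 : rep h0 c' ∈ T := Finset.mem_image_of_mem _ hc'C
        have h4 : rep h0 c' ∈ c' := rep_mem h0 (hE0 c' hc'C)
        have h5 : rep h0 c' ∈ c' ∩ c := Finset.mem_inter.2 ⟨h4, heq ▸ h3⟩
        rw [hdisj c' hc'C c hcC hc'ne] at h5
        exact absurd h5 (Finset.notMem_empty _)


lemma sum_ge_card_div (hk0 : 0 < k) (s : Finset (Finset (Fin n)))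
    (hs : ∀ h ∈ s, h.card ≤ k) (hne : ∀ h ∈ s, h.Nonempty) :
    (s.card : ℚ) / k ≤ ∑ h ∈ s, (1 : ℚ) / h.card := by
  have : ∀ h ∈ s, (1 : ℚ) / k ≤ 1 / h.card := by
    intro h hh
    apply one_div_le_one_div_of_le
    · exact_mod_cast Finset.card_pos.2 (hne h hh)
    · exact_mod_cast hs h hh
  calc (s.card : ℚ) / k = ∑ _h ∈ s, (1 : ℚ) / k := by
        rw [Finset.sum_const, nsmul_eq_mul]; ring
    _ ≤ ∑ h ∈ s, (1 : ℚ) / h.card := Finset.sum_le_sum this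

lemma sig_nonneg (E : Finset (Finset (Fin n))) (v : Fin n) : 0 ≤ sig E v := by
  apply Finset.sum_nonneg
  intro h _
  positivity

/-- split of sig according to membership of a second vertex -/
lemma sig_split (E : Finset (Finset (Fin n))) (u v : Fin n) :
    sig E u = (∑ h ∈ E.filter (fun h => u ∈ h ∧ v ∈ h), (1 : ℚ) / h.card) +
      ∑ h ∈ E.filter (fun h => u ∈ h ∧ v ∉ h), (1 : ℚ) / h.card := by
  unfold sig
  rw [← Finset.sum_filter_add_sum_filter_not (E.filter (fun h => u ∈ h)) (fun h => v ∈ h)]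
  congr 1 <;> rw [Finset.filter_filter] <;> apply Finset.filter_congr <;> intro h _ <;> tauto

lemma hdeg_split (E : Finset (Finset (Fin n))) (u v : Fin n) :
    hdeg E u = (E.filter (fun h => u ∈ h ∧ v ∈ h)).card +
      (E.filter (fun h => u ∈ h ∧ v ∉ h)).card := by
  unfold hdeg
  rw [← Finset.card_filter_add_card_filter_not (s := E.filter (fun h => u ∈ h))
    (p := fun h => v ∈ h)]
  congr 1 <;> rw [Finset.filter_filter] <;> apply Finset.filter_congr <;> intro h _ <;> tauto

lemma cores_card_le_sum (E : Finset (Finset (Fin n))) (u v : Fin n) :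
    (cores E u v).card ≤ (E.filter (fun h => u ∈ h ∧ v ∉ h)).card +
      (E.filter (fun h => v ∈ h ∧ u ∉ h)).card := by
  unfold cores
  refine le_trans (Finset.card_union_le _ _) ?_
  exact Nat.add_le_add Finset.card_image_le Finset.card_image_le

/-- lower bound for sig of a vertex with a distinguished edge -/
lemma sig_ge_edge (hk0 : 0 < k) {E : Finset (Finset (Fin n))}
    (hcardle : ∀ h ∈ E, h.card ≤ k) (hne : ∀ h ∈ E, h.Nonempty)
    {v : Fin n} {h₀ : Finset (Fin n)} (hh : h₀ ∈ E) (hv : v ∈ h₀) :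
    1 / (h₀.card : ℚ) + ((hdeg E v : ℚ) - 1) / k ≤ sig E v := by
  unfold sig hdeg
  have hmem : h₀ ∈ E.filter (fun h => v ∈ h) := Finset.mem_filter.2 ⟨hh, hv⟩
  rw [← Finset.add_sum_erase _ _ hmem]
  have h1 : (((E.filter (fun h => v ∈ h)).erase h₀).card : ℚ) =
      ((E.filter (fun h => v ∈ h)).card : ℚ) - 1 := by
    rw [Finset.card_erase_of_mem hmem]
    have : 0 < (E.filter (fun h => v ∈ h)).card := Finset.card_pos.2 ⟨h₀, hmem⟩
    push_cast [Nat.cast_sub this]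
    ring
  have h2 := sum_ge_card_div hk0 ((E.filter (fun h => v ∈ h)).erase h₀)
    (fun h hh' => hcardle h (Finset.mem_filter.1 (Finset.mem_of_mem_erase hh')).1)
    (fun h hh' => hne h (Finset.mem_filter.1 (Finset.mem_of_mem_erase hh')).1)
  rw [h1] at h2
  linarith

lemma sig_ge_deg (hk0 : 0 < k) {E : Finset (Finset (Fin n))}
    (hcardle : ∀ h ∈ E, h.card ≤ k) (hne : ∀ h ∈ E, h.Nonempty) (v : Fin n) :
    ((hdeg E v : ℚ)) / k ≤ sig E v := by
  unfold sig hdeg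
  exact sum_ge_card_div hk0 _
    (fun h hh' => hcardle h (Finset.mem_filter.1 hh').1)
    (fun h hh' => hne h (Finset.mem_filter.1 hh').1)

/-- the key pair inequality: sig u + sig v ≥ |cores|/k + 2·(#shared)/k -/
lemma sig_pair (hk0 : 0 < k) {E : Finset (Finset (Fin n))}
    (hcardle : ∀ h ∈ E, h.card ≤ k) (hne : ∀ h ∈ E, h.Nonempty) (u v : Fin n) :
    ((cores E u v).card : ℚ) / k +
      2 * ((E.filter (fun h => u ∈ h ∧ v ∈ h)).card : ℚ) / k ≤ sig E u + sig E v := by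
  have hu := sig_split E u v
  have hv := sig_split E v u
  have hsame : E.filter (fun h => v ∈ h ∧ u ∈ h) = E.filter (fun h => u ∈ h ∧ v ∈ h) := by
    apply Finset.filter_congr; intro h _; tauto
  rw [hsame] at hv
  have b1 := sum_ge_card_div hk0 (E.filter (fun h => u ∈ h ∧ v ∉ h))
    (fun h hh' => hcardle h (Finset.mem_filter.1 hh').1)
    (fun h hh' => hne h (Finset.mem_filter.1 hh').1)
  have b2 := sum_ge_card_div hk0 (E.filter (fun h => v ∈ h ∧ u ∉ h))
    (fun h hh' => hcardle h (Finset.mem_filter.1 hh').1)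
    (fun h hh' => hne h (Finset.mem_filter.1 hh').1)
  have b3 := sum_ge_card_div hk0 (E.filter (fun h => u ∈ h ∧ v ∈ h))
    (fun h hh' => hcardle h (Finset.mem_filter.1 hh').1)
    (fun h hh' => hne h (Finset.mem_filter.1 hh').1)
  have hc := cores_card_le_sum E u v
  have hc' : ((cores E u v).card : ℚ) ≤ ((E.filter (fun h => u ∈ h ∧ v ∉ h)).card : ℚ) +
      ((E.filter (fun h => v ∈ h ∧ u ∉ h)).card : ℚ) := by exact_mod_cast hc
  have hk0' : (0:ℚ) < k := by exact_mod_cast hk0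
  rw [hu, hv]
  have h6 : ((cores E u v).card : ℚ) / k ≤ (((E.filter (fun h => u ∈ h ∧ v ∉ h)).card : ℚ) +
      ((E.filter (fun h => v ∈ h ∧ u ∉ h)).card : ℚ)) / k := by gcongr
  rw [add_div] at h6
  have h7 : 2 * ((E.filter (fun h => u ∈ h ∧ v ∈ h)).card : ℚ) / k =
      ((E.filter (fun h => u ∈ h ∧ v ∈ h)).card : ℚ) / k +
      ((E.filter (fun h => u ∈ h ∧ v ∈ h)).card : ℚ) / k := by ring
  linarith [b1, b2, b3]

/-- each core is nonempty provided the singletons {u},{v} are not edges -/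
lemma cores_nonempty {E : Finset (Finset (Fin n))} {u v : Fin n}
    (hsu : {u} ∉ E) (hsv : {v} ∉ E) :
    ∀ c ∈ cores E u v, c.Nonempty := by
  intro c hc
  unfold cores at hc
  rw [Finset.mem_union] at hc
  rcases hc with hc | hc <;> obtain ⟨h, hh, rfl⟩ := Finset.mem_image.1 hc <;>
    rw [Finset.mem_filter] at hh
  · rcases Finset.eq_empty_or_nonempty (h.erase u) with he | he
    · exfalso
      have : h = {u} := by
        apply Finset.eq_singleton_iff_unique_mem.2
        refine ⟨hh.2.1, fun x hx => ?_⟩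
        by_contra hxu
        exact absurd (Finset.mem_erase.2 ⟨hxu, hx⟩) (he ▸ Finset.notMem_empty x)
      exact hsu (this ▸ hh.1)
    · exact he
  · rcases Finset.eq_empty_or_nonempty (h.erase v) with he | he
    · exfalso
      have : h = {v} := by
        apply Finset.eq_singleton_iff_unique_mem.2
        refine ⟨hh.2.1, fun x hx => ?_⟩
        by_contra hxv
        exact absurd (Finset.mem_erase.2 ⟨hxv, hx⟩) (he ▸ Finset.notMem_empty x)
      exact hsv (this ▸ hh.1)
    · exact he

/-- neighbourhood of a vertex -/
def nbr (E : Finset (Finset (Fin n))) (u : Fin n) : Finset (Fin n) :=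
  ((E.filter (fun h => u ∈ h)).biUnion id).erase u

lemma mem_nbr {E : Finset (Finset (Fin n))} {u w : Fin n} :
    w ∈ nbr E u ↔ w ≠ u ∧ ∃ h ∈ E, u ∈ h ∧ w ∈ h := by
  unfold nbr
  simp only [Finset.mem_erase, Finset.mem_biUnion, Finset.mem_filter, id]
  tauto

lemma nbr_card_ge (E : Finset (Finset (Fin n))) {u : Fin n} {h : Finset (Fin n)}
    (hh : h ∈ E) (hu : u ∈ h) : h.card - 1 ≤ (nbr E u).card := by
  have : h.erase u ⊆ nbr E u := by
    intro x hx
    rw [Finset.mem_erase] at hx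
    exact mem_nbr.2 ⟨hx.1, h, hh, hu, hx.2⟩
  calc h.card - 1 = (h.erase u).card := (Finset.card_erase_of_mem hu).symm
    _ ≤ _ := Finset.card_le_card this

lemma nbr_card_ge_two_edges (E : Finset (Finset (Fin n))) {u : Fin n}
    {h h' : Finset (Fin n)} (hh : h ∈ E) (hh' : h' ∈ E) (hne : h ≠ h')
    (hu : u ∈ h) (hu' : u ∈ h') (hle : h.card ≤ h'.card) :
    h.card ≤ (nbr E u).card := by
  by_cases hsub : h ⊆ h'
  · have : h.card < h'.card := Finset.card_lt_card (Finset.ssubset_iff_subset_ne.2 ⟨hsub, hne⟩)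
    have := nbr_card_ge E hh' hu'
    omega
  · obtain ⟨x, hxh, hxh'⟩ := Finset.not_subset.1 hsub
    have hsub2 : insert x (h'.erase u) ⊆ nbr E u := by
      intro y hy
      rcases Finset.mem_insert.1 hy with rfl | hy'
      · refine mem_nbr.2 ⟨?_, h, hh, hu, hxh⟩
        rintro rfl; exact hxh' hu'
      · rw [Finset.mem_erase] at hy'
        exact mem_nbr.2 ⟨hy'.1, h', hh', hu', hy'.2⟩
    have hcard : (insert x (h'.erase u)).card = h'.card := by
      rw [Finset.card_insert_of_notMem (fun hc => hxh' (Finset.mem_of_mem_erase hc)),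
        Finset.card_erase_of_mem hu']
      have : 0 < h'.card := Finset.card_pos.2 ⟨u, hu'⟩
      omega
    have := Finset.card_le_card hsub2
    omega

lemma nbr_nonempty {E : Finset (Finset (Fin n))} {u : Fin n} {h : Finset (Fin n)}
    (hh : h ∈ E) (hu : u ∈ h) (h2 : 2 ≤ h.card) : 0 < (nbr E u).card := by
  have := nbr_card_ge E hh hu
  omega


/-- sum over two distinct edges -/
lemma sig_ge_two {E : Finset (Finset (Fin n))} {v : Fin n} {h₁ h₂ : Finset (Fin n)}
    (hh₁ : h₁ ∈ E) (hh₂ : h₂ ∈ E) (hne12 : h₁ ≠ h₂) (hv₁ : v ∈ h₁) (hv₂ : v ∈ h₂) :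
    1 / (h₁.card : ℚ) + 1 / (h₂.card : ℚ) ≤ sig E v := by
  unfold sig
  have hsub : ({h₁, h₂} : Finset (Finset (Fin n))) ⊆ E.filter (fun h => v ∈ h) := by
    intro h hh
    rcases Finset.mem_insert.1 hh with rfl | hh
    · exact Finset.mem_filter.2 ⟨hh₁, hv₁⟩
    · rw [Finset.mem_singleton] at hh
      subst hh; exact Finset.mem_filter.2 ⟨hh₂, hv₂⟩
  calc 1 / (h₁.card : ℚ) + 1 / (h₂.card : ℚ)
      = ∑ h ∈ ({h₁, h₂} : Finset (Finset (Fin n))), (1 : ℚ) / h.card := by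
        rw [Finset.sum_pair hne12]
    _ ≤ _ := Finset.sum_le_sum_of_subset_of_nonneg hsub (by intro h _ _; positivity)

lemma not_mem_uv_of_cores {E : Finset (Finset (Fin n))} {u v : Fin n}
    {T : Finset (Fin n)} (hmemT : ∀ y ∈ T, ∃ c ∈ cores E u v, y ∈ c) :
    u ∉ T ∧ v ∉ T := by
  constructor
  · intro h; obtain ⟨c, hc, hyc⟩ := hmemT u h; exact (cores_not_mem_u hc).1 hyc
  · intro h; obtain ⟨c, hc, hyc⟩ := hmemT v h; exact (cores_not_mem_u hc).2 hyc

/-- THE SHARING LEMMA -/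
lemma sharing (hk : 3 ≤ k) (hn : 3 * k ≤ n) {E : Finset (Finset (Fin n))}
    (hne : ∀ h ∈ E, h.Nonempty) (hcardle : ∀ h ∈ E, h.card ≤ k)
    (hdet : Detectable k k E) {u v w : Fin n} (huv : u ≠ v)
    (hsu : ({u} : Finset (Fin n)) ∉ E) (hsv : ({v} : Finset (Fin n)) ∉ E)
    (hdeg_sum : hdeg E u + hdeg E v = k)
    (hshared : E.filter (fun h => u ∈ h ∧ v ∈ h) = ∅)
    (hu_sig : sig E u < (k + 2) / (2 * k)) (hv_sig : sig E v < (k + 2) / (2 * k))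
    {hu_e hv_e : Finset (Fin n)} (h1E : hu_e ∈ E) (h2E : hv_e ∈ E)
    (h1u : u ∈ hu_e) (h2v : v ∈ hv_e) (hw1 : w ∈ hu_e) (hw2 : w ∈ hv_e)
    (hwu : w ≠ u) (hwv : w ≠ v)
    (hextra : 4 ≤ k ∨ ∃ h ∈ E, (u ∈ h ∨ v ∈ h) ∧ h.card = 2) : False := by
  have h0 : 0 < n := by omega
  have hk0 : 0 < k := by omega
  have hkQ : (0:ℚ) < k := by exact_mod_cast hk0
  have hE0 := cores_nonempty hsu hsv
  set C := cores E u v with hCdef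
  -- |C| = k
  have hCk : C.card = k := by
    have h1 := pair_lemma hk hn hcardle hdet huv hE0
    have h2 := cores_card_le_sum E u v
    rw [← hCdef] at h1 h2
    have h3 := hdeg_split E u v
    have h4 := hdeg_split E v u
    have h5 : E.filter (fun h => v ∈ h ∧ u ∈ h) = ∅ := by
      rw [← hshared]; apply Finset.filter_congr; intro h _; exact by tauto
    rw [hshared] at h3
    rw [h5] at h4
    simp only [Finset.card_empty, zero_add] at h3 h4
    omega
  -- v ∉ hu_e, u ∉ hv_e
  have hv1 : v ∉ hu_e := by
    intro hc
    have : hu_e ∈ E.filter (fun h => u ∈ h ∧ v ∈ h) := Finset.mem_filter.2 ⟨h1E, h1u, hc⟩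
    rw [hshared] at this; exact absurd this (Finset.notMem_empty _)
  have hu2 : u ∉ hv_e := by
    intro hc
    have : hv_e ∈ E.filter (fun h => u ∈ h ∧ v ∈ h) := Finset.mem_filter.2 ⟨h2E, hc, h2v⟩
    rw [hshared] at this; exact absurd this (Finset.notMem_empty _)
  set c₁ := hu_e.erase u with hc₁def
  set c₂ := hv_e.erase v with hc₂def
  have hc₁C : c₁ ∈ C := mem_cores_iff.2 (Or.inl ⟨hu_e, h1E, h1u, hv1, rfl⟩)
  have hc₂C : c₂ ∈ C := mem_cores_iff.2 (Or.inr ⟨hv_e, h2E, h2v, hu2, rfl⟩)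
  have hwc₁ : w ∈ c₁ := Finset.mem_erase.2 ⟨hwu, hw1⟩
  have hwc₂ : w ∈ c₂ := Finset.mem_erase.2 ⟨hwv, hw2⟩
  -- c₁ ≠ c₂
  have hc12 : c₁ ≠ c₂ := by
    intro heq
    -- then the union of images has card < k
    have himg1 : c₁ ∈ (E.filter (fun h => u ∈ h ∧ v ∉ h)).image (fun h => h.erase u) := by
      apply Finset.mem_image_of_mem
      exact Finset.mem_filter.2 ⟨h1E, h1u, hv1⟩
    have himg2 : c₁ ∈ (E.filter (fun h => v ∈ h ∧ u ∉ h)).image (fun h => h.erase v) := by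
      rw [heq, hc₂def]
      apply Finset.mem_image_of_mem
      exact Finset.mem_filter.2 ⟨h2E, h2v, hu2⟩
    have hinter : 0 < (((E.filter (fun h => u ∈ h ∧ v ∉ h)).image (fun h => h.erase u)) ∩
        ((E.filter (fun h => v ∈ h ∧ u ∉ h)).image (fun h => h.erase v))).card :=
      Finset.card_pos.2 ⟨c₁, Finset.mem_inter.2 ⟨himg1, himg2⟩⟩
    have hcu := Finset.card_union_add_card_inter
      ((E.filter (fun h => u ∈ h ∧ v ∉ h)).image (fun h => h.erase u))
      ((E.filter (fun h => v ∈ h ∧ u ∉ h)).image (fun h => h.erase v))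
    have hC_eq : C = ((E.filter (fun h => u ∈ h ∧ v ∉ h)).image (fun h => h.erase u)) ∪
        ((E.filter (fun h => v ∈ h ∧ u ∉ h)).image (fun h => h.erase v)) := rfl
    have hi1 : ((E.filter (fun h => u ∈ h ∧ v ∉ h)).image (fun h => h.erase u)).card ≤
        (E.filter (fun h => u ∈ h ∧ v ∉ h)).card := Finset.card_image_le
    have hi2 : ((E.filter (fun h => v ∈ h ∧ u ∉ h)).image (fun h => h.erase v)).card ≤
        (E.filter (fun h => v ∈ h ∧ u ∉ h)).card := Finset.card_image_le
    have h3 := hdeg_split E u v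
    have h4 := hdeg_split E v u
    have h5 : E.filter (fun h => v ∈ h ∧ u ∈ h) = ∅ := by
      rw [← hshared]; apply Finset.filter_congr; intro h _; exact by tauto
    rw [hshared] at h3
    rw [h5] at h4
    simp only [Finset.card_empty, zero_add] at h3 h4
    rw [← hC_eq] at hcu
    have hCk' : C.card = k := hCk
    omega
  set G := (C.erase c₁).erase c₂ with hGdef
  have hc₂mem : c₂ ∈ C.erase c₁ := Finset.mem_erase.2 ⟨fun h => hc12 h.symm, hc₂C⟩
  have hGcard : G.card = k - 2 := by
    rw [hGdef, Finset.card_erase_of_mem hc₂mem, Finset.card_erase_of_mem hc₁C, hCk]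
    omega
  have hGC : ∀ g ∈ G, g ∈ C :=
    fun g hg => Finset.mem_of_mem_erase (Finset.mem_of_mem_erase hg)
  have hGne : ∀ g ∈ G, g ≠ c₁ ∧ g ≠ c₂ := by
    intro g hg
    exact ⟨(Finset.mem_erase.1 (Finset.mem_of_mem_erase hg)).1, (Finset.mem_erase.1 hg).1⟩
  have hdecomp : ∀ c ∈ C, c = c₁ ∨ c = c₂ ∨ c ∈ G := by
    intro c hc
    by_cases h1 : c = c₁
    · exact Or.inl h1
    by_cases h2 : c = c₂
    · exact Or.inr (Or.inl h2)
    · exact Or.inr (Or.inr (Finset.mem_erase.2 ⟨h2, Finset.mem_erase.2 ⟨h1, hc⟩⟩))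
  have hCbig : C.card ≤ 2 * k - 2 := by omega
  -- Case A : some core in G contains w
  by_cases hA : ∃ g ∈ G, w ∈ g
  · obtain ⟨g, hgG, hwg⟩ := hA
    set T := insert w ((G.erase g).image (rep h0)) with hT
    have hmemT : ∀ y ∈ T, ∃ c ∈ C, y ∈ c := by
      intro y hy
      rcases Finset.mem_insert.1 hy with rfl | hy'
      · exact ⟨c₁, hc₁C, hwc₁⟩
      · obtain ⟨c, hcmem, rfl⟩ := Finset.mem_image.1 hy'
        have hcC : c ∈ C := hGC c (Finset.mem_of_mem_erase hcmem)
        exact ⟨c, hcC, rep_mem h0 (hE0 c hcC)⟩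
    obtain ⟨huT, hvT⟩ := not_mem_uv_of_cores hmemT
    refine block hk hn hcardle hdet huv ?_ huT hvT hCbig ?_
    · calc T.card ≤ ((G.erase g).image (rep h0)).card + 1 := Finset.card_insert_le _ _
        _ ≤ (G.erase g).card + 1 := by
          have := Finset.card_image_le (s := G.erase g) (f := rep h0)
          omega
        _ ≤ k - 2 := by
          rw [Finset.card_erase_of_mem hgG]
          omega
    · intro c hc
      rcases hdecomp c hc with rfl | hcc
      · exact ⟨w, Finset.mem_inter.2 ⟨hwc₁, Finset.mem_insert_self _ _⟩⟩
      rcases hcc with rfl | hcG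
      · exact ⟨w, Finset.mem_inter.2 ⟨hwc₂, Finset.mem_insert_self _ _⟩⟩
      by_cases hcg : c = g
      · exact ⟨w, Finset.mem_inter.2 ⟨hcg ▸ hwg, Finset.mem_insert_self _ _⟩⟩
      · refine ⟨rep h0 c, Finset.mem_inter.2 ⟨rep_mem h0 (hE0 c (hGC c hcG)), ?_⟩⟩
        exact Finset.mem_insert.2 (Or.inr (Finset.mem_image_of_mem _
          (Finset.mem_erase.2 ⟨hcg, hcG⟩)))
  push_neg at hA
  -- Case B : two cores in G intersect
  by_cases hB : ∃ g ∈ G, ∃ g' ∈ G, g ≠ g' ∧ (g ∩ g').Nonempty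
  · obtain ⟨g, hgG, g', hg'G, hgg', x, hx⟩ := hB
    rw [Finset.mem_inter] at hx
    set T := insert w (insert x (((G.erase g).erase g').image (rep h0))) with hT
    have hmemT : ∀ y ∈ T, ∃ c ∈ C, y ∈ c := by
      intro y hy
      rcases Finset.mem_insert.1 hy with rfl | hy'
      · exact ⟨c₁, hc₁C, hwc₁⟩
      rcases Finset.mem_insert.1 hy' with rfl | hy''
      · exact ⟨g, hGC g hgG, hx.1⟩
      · obtain ⟨c, hcmem, rfl⟩ := Finset.mem_image.1 hy''
        have hcC : c ∈ C := hGC c (Finset.mem_of_mem_erase (Finset.mem_of_mem_erase hcmem))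
        exact ⟨c, hcC, rep_mem h0 (hE0 c hcC)⟩
    obtain ⟨huT, hvT⟩ := not_mem_uv_of_cores hmemT
    refine block hk hn hcardle hdet huv ?_ huT hvT hCbig ?_
    · have hg'mem : g' ∈ G.erase g := Finset.mem_erase.2 ⟨fun h => hgg' h.symm, hg'G⟩
      calc T.card ≤ (insert x (((G.erase g).erase g').image (rep h0))).card + 1 :=
            Finset.card_insert_le _ _
        _ ≤ (((G.erase g).erase g').image (rep h0)).card + 2 := by
            have := Finset.card_insert_le x (((G.erase g).erase g').image (rep h0))
            omega
        _ ≤ ((G.erase g).erase g').card + 2 := by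
            have := Finset.card_image_le (s := (G.erase g).erase g') (f := rep h0)
            omega
        _ ≤ k - 2 := by
            rw [Finset.card_erase_of_mem hg'mem, Finset.card_erase_of_mem hgG]
            have h2G : 2 ≤ G.card := Finset.one_lt_card.2 ⟨g, hgG, g', hg'G, hgg'⟩
            omega
    · intro c hc
      rcases hdecomp c hc with rfl | hcc
      · exact ⟨w, Finset.mem_inter.2 ⟨hwc₁, Finset.mem_insert_self _ _⟩⟩
      rcases hcc with rfl | hcG
      · exact ⟨w, Finset.mem_inter.2 ⟨hwc₂, Finset.mem_insert_self _ _⟩⟩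
      by_cases hcg : c = g
      · exact ⟨x, Finset.mem_inter.2 ⟨hcg ▸ hx.1,
          Finset.mem_insert.2 (Or.inr (Finset.mem_insert_self _ _))⟩⟩
      by_cases hcg' : c = g'
      · exact ⟨x, Finset.mem_inter.2 ⟨hcg' ▸ hx.2,
          Finset.mem_insert.2 (Or.inr (Finset.mem_insert_self _ _))⟩⟩
      · refine ⟨rep h0 c, Finset.mem_inter.2 ⟨rep_mem h0 (hE0 c (hGC c hcG)), ?_⟩⟩
        exact Finset.mem_insert.2 (Or.inr (Finset.mem_insert.2 (Or.inr
          (Finset.mem_image_of_mem _ (Finset.mem_erase.2 ⟨hcg',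
            Finset.mem_erase.2 ⟨hcg, hcG⟩⟩)))))
  push_neg at hB
  have hdisj : ∀ g ∈ G, ∀ g' ∈ G, g ≠ g' → ∀ x, x ∈ g → x ∉ g' := by
    intro g hg g' hg' hne' x hxg hxg'
    have h2 := hB g hg g' hg' hne'
    rw [Finset.eq_empty_iff_forall_notMem] at h2
    exact h2 x (Finset.mem_inter.2 ⟨hxg, hxg'⟩)
  -- Case C : some core in G meets c₁ ∩ c₂
  by_cases hCc : ∃ g ∈ G, ∃ x ∈ g, x ∈ c₁ ∧ x ∈ c₂
  · obtain ⟨g, hgG, x, hxg, hxc₁, hxc₂⟩ := hCc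
    set T := insert x ((G.erase g).image (rep h0)) with hT
    have hmemT : ∀ y ∈ T, ∃ c ∈ C, y ∈ c := by
      intro y hy
      rcases Finset.mem_insert.1 hy with rfl | hy'
      · exact ⟨c₁, hc₁C, hxc₁⟩
      · obtain ⟨c, hcmem, rfl⟩ := Finset.mem_image.1 hy'
        have hcC : c ∈ C := hGC c (Finset.mem_of_mem_erase hcmem)
        exact ⟨c, hcC, rep_mem h0 (hE0 c hcC)⟩
    obtain ⟨huT, hvT⟩ := not_mem_uv_of_cores hmemT
    refine block hk hn hcardle hdet huv ?_ huT hvT hCbig ?_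
    · calc T.card ≤ ((G.erase g).image (rep h0)).card + 1 := Finset.card_insert_le _ _
        _ ≤ (G.erase g).card + 1 := by
          have := Finset.card_image_le (s := G.erase g) (f := rep h0)
          omega
        _ ≤ k - 2 := by
          rw [Finset.card_erase_of_mem hgG]
          omega
    · intro c hc
      rcases hdecomp c hc with rfl | hcc
      · exact ⟨x, Finset.mem_inter.2 ⟨hxc₁, Finset.mem_insert_self _ _⟩⟩
      rcases hcc with rfl | hcG
      · exact ⟨x, Finset.mem_inter.2 ⟨hxc₂, Finset.mem_insert_self _ _⟩⟩
      by_cases hcg : c = g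
      · exact ⟨x, Finset.mem_inter.2 ⟨hcg ▸ hxg, Finset.mem_insert_self _ _⟩⟩
      · refine ⟨rep h0 c, Finset.mem_inter.2 ⟨rep_mem h0 (hE0 c (hGC c hcG)), ?_⟩⟩
        exact Finset.mem_insert.2 (Or.inr (Finset.mem_image_of_mem _
          (Finset.mem_erase.2 ⟨hcg, hcG⟩)))

  push_neg at hCc
  -- G nonempty, rep is injective on subfamilies of G
  have hGnon : G.Nonempty := Finset.card_pos.1 (by omega)
  have hrepinj : ∀ s : Finset (Finset (Fin n)), s ⊆ G → (s.image (rep h0)).card = s.card := by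
    intro s hsG
    apply Finset.card_image_of_injOn
    intro a ha b hb hab
    by_contra hne'
    have hra : rep h0 a ∈ a := rep_mem h0 (hE0 a (hGC a (hsG ha)))
    have hrb : rep h0 a ∈ b := by rw [hab]; exact rep_mem h0 (hE0 b (hGC b (hsG hb)))
    exact hdisj a (hsG ha) b (hsG hb) hne' _ hra hrb
  have hnotim : ∀ g₀ ∈ G, ∀ y ∈ g₀, y ∉ (G.erase g₀).image (rep h0) ∧ y ≠ w := by
    intro g₀ hg₀ y hy
    constructor
    · intro hc
      obtain ⟨g', hg', hgy⟩ := Finset.mem_image.1 hc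
      have hg'G : g' ∈ G := Finset.mem_of_mem_erase hg'
      have hgne : g₀ ≠ g' := fun h => (Finset.mem_erase.1 hg').1 h.symm
      exact hdisj g₀ hg₀ g' hg'G hgne y hy (hgy ▸ rep_mem h0 (hE0 g' (hGC g' hg'G)))
    · intro h; exact hA g₀ hg₀ (h ▸ hy)
  have hwim : ∀ g₀, w ∉ (G.erase g₀).image (rep h0) := by
    intro g₀ hc
    obtain ⟨g', hg', hgy⟩ := Finset.mem_image.1 hc
    have hg'G : g' ∈ G := Finset.mem_of_mem_erase hg'
    exact hA g' hg'G (hgy ▸ rep_mem h0 (hE0 g' (hGC g' hg'G)))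
  have hScards : ∀ g₀ ∈ G, ∀ y ∈ g₀,
      (insert w (insert y ((G.erase g₀).image (rep h0)))).card = k - 1 := by
    intro g₀ hg₀ y hy
    obtain ⟨hyim, hyw⟩ := hnotim g₀ hg₀ y hy
    rw [Finset.card_insert_of_notMem (by
        intro hc
        rcases Finset.mem_insert.1 hc with h' | h'
        · exact hyw h'.symm
        · exact hwim g₀ h'),
      Finset.card_insert_of_notMem hyim,
      hrepinj (G.erase g₀) (Finset.erase_subset _ _),
      Finset.card_erase_of_mem hg₀, hGcard]
    omega
  have hkey : ∀ g₀ ∈ G, ∀ y ∈ g₀,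
      insert w (insert y ((G.erase g₀).image (rep h0))) = c₁ ∨
      insert w (insert y ((G.erase g₀).image (rep h0))) = c₂ := by
    intro g₀ hg₀ y hy
    set S := insert w (insert y ((G.erase g₀).image (rep h0))) with hSdef
    have hScard : S.card = k - 1 := hScards g₀ hg₀ y hy
    have hmemS : ∀ z ∈ S, ∃ c ∈ C, z ∈ c := by
      intro z hz
      rcases Finset.mem_insert.1 hz with rfl | hz'
      · exact ⟨c₁, hc₁C, hwc₁⟩
      rcases Finset.mem_insert.1 hz' with rfl | hz''
      · exact ⟨g₀, hGC g₀ hg₀, hy⟩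
      · obtain ⟨c, hcmem, rfl⟩ := Finset.mem_image.1 hz''
        have hcC : c ∈ C := hGC c (Finset.mem_of_mem_erase hcmem)
        exact ⟨c, hcC, rep_mem h0 (hE0 c hcC)⟩
    obtain ⟨huS, hvS⟩ := not_mem_uv_of_cores hmemS
    have hhits : ∀ c ∈ C, (c ∩ S).Nonempty := by
      intro c hc
      rcases hdecomp c hc with rfl | hcc
      · exact ⟨w, Finset.mem_inter.2 ⟨hwc₁, Finset.mem_insert_self _ _⟩⟩
      rcases hcc with rfl | hcG
      · exact ⟨w, Finset.mem_inter.2 ⟨hwc₂, Finset.mem_insert_self _ _⟩⟩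
      by_cases hcg : c = g₀
      · exact ⟨y, Finset.mem_inter.2 ⟨hcg ▸ hy,
          Finset.mem_insert.2 (Or.inr (Finset.mem_insert_self _ _))⟩⟩
      · refine ⟨rep h0 c, Finset.mem_inter.2 ⟨rep_mem h0 (hE0 c (hGC c hcG)), ?_⟩⟩
        exact Finset.mem_insert.2 (Or.inr (Finset.mem_insert.2 (Or.inr
          (Finset.mem_image_of_mem _ (Finset.mem_erase.2 ⟨hcg, hcG⟩)))))
    obtain ⟨c, hcC, hcc⟩ := swap_lemma hk hcardle hdet huv hScard huS hvS
    rcases hcc with hemp | heq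
    · obtain ⟨z, hz⟩ := hhits c hcC
      rw [hemp] at hz; exact absurd hz (Finset.notMem_empty z)
    rcases hdecomp c hcC with h1' | hcc2
    · left; rw [← h1', heq]
    rcases hcc2 with h2' | hcG
    · right; rw [← h2', heq]
    · exfalso
      have hwc : w ∈ c := by rw [heq]; exact Finset.mem_insert_self _ _
      exact hA c hcG hwc
  have hSinj : ∀ g₀ ∈ G, ∀ y ∈ g₀, ∀ y' ∈ g₀,
      insert w (insert y ((G.erase g₀).image (rep h0))) =
      insert w (insert y' ((G.erase g₀).image (rep h0))) → y = y' := by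
    intro g₀ hg₀ y hy y' hy' heq
    obtain ⟨hyim, hyw⟩ := hnotim g₀ hg₀ y hy
    have hymem : y ∈ insert w (insert y' ((G.erase g₀).image (rep h0))) := by
      rw [← heq]
      exact Finset.mem_insert.2 (Or.inr (Finset.mem_insert_self _ _))
    rcases Finset.mem_insert.1 hymem with h' | h'
    · exact absurd h' hyw
    rcases Finset.mem_insert.1 h' with h'' | h''
    · exact h''
    · exact absurd h'' hyim
  -- big case : some core of G has ≥ 3 elements
  by_cases hbig : ∃ g ∈ G, 3 ≤ g.card
  · obtain ⟨g₀, hg₀, hg3⟩ := hbig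
    obtain ⟨y₁, hy₁, y₂, hy₂, h12⟩ := Finset.one_lt_card.1 (by omega : 1 < g₀.card)
    have hsd : (g₀ \ {y₁, y₂}).Nonempty := by
      apply Finset.card_pos.1
      have h1 := Finset.le_card_sdiff ({y₁, y₂} : Finset (Fin n)) g₀
      have h2 : ({y₁, y₂} : Finset (Fin n)).card ≤ 2 := Finset.card_le_two
      omega
    obtain ⟨y₃, hy₃'⟩ := hsd
    rw [Finset.mem_sdiff] at hy₃'
    obtain ⟨hy₃, hy₃n⟩ := hy₃'
    simp only [Finset.mem_insert, Finset.mem_singleton, not_or] at hy₃n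
    obtain ⟨h13, h23⟩ := hy₃n
    rcases hkey g₀ hg₀ y₁ hy₁ with e1 | e1 <;>
      rcases hkey g₀ hg₀ y₂ hy₂ with e2 | e2 <;>
        rcases hkey g₀ hg₀ y₃ hy₃ with e3 | e3
    · exact h12 (hSinj g₀ hg₀ y₁ hy₁ y₂ hy₂ (e1.trans e2.symm))
    · exact h12 (hSinj g₀ hg₀ y₁ hy₁ y₂ hy₂ (e1.trans e2.symm))
    · exact h13 (hSinj g₀ hg₀ y₃ hy₃ y₁ hy₁ (e3.trans e1.symm))
    · exact h23 (hSinj g₀ hg₀ y₃ hy₃ y₂ hy₂ (e3.trans e2.symm))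
    · exact h23 (hSinj g₀ hg₀ y₃ hy₃ y₂ hy₂ (e3.trans e2.symm))
    · exact h13 (hSinj g₀ hg₀ y₃ hy₃ y₁ hy₁ (e3.trans e1.symm))
    · exact h12 (hSinj g₀ hg₀ y₁ hy₁ y₂ hy₂ (e1.trans e2.symm))
    · exact h12 (hSinj g₀ hg₀ y₁ hy₁ y₂ hy₂ (e1.trans e2.symm))
  push_neg at hbig
  -- case : some core of G has exactly 2 elements
  by_cases htwo : ∃ g ∈ G, g.card = 2
  · obtain ⟨g₀, hg₀, hg2⟩ := htwo
    obtain ⟨y, y', hyy', hg₀eq⟩ := Finset.card_eq_two.1 hg2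
    have hy : y ∈ g₀ := by rw [hg₀eq]; exact Finset.mem_insert_self _ _
    have hy' : y' ∈ g₀ := by
      rw [hg₀eq]; exact Finset.mem_insert.2 (Or.inr (Finset.mem_singleton_self _))
    have main : ∀ z z' : Fin n, z ∈ g₀ → z' ∈ g₀ →
        insert w (insert z ((G.erase g₀).image (rep h0))) = c₁ →
        insert w (insert z' ((G.erase g₀).image (rep h0))) = c₂ → False := by
      intro z z' hz hz' ez ez'
      by_cases hG2 : 2 ≤ G.card
      · -- there is another core g' in G, its rep lies in c₁ ∩ c₂, contradiction with hCc
        have : (G.erase g₀).Nonempty := by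
          apply Finset.card_pos.1
          rw [Finset.card_erase_of_mem hg₀]; omega
        obtain ⟨g', hg'⟩ := this
        have hg'G : g' ∈ G := Finset.mem_of_mem_erase hg'
        have hrep1 : rep h0 g' ∈ c₁ := by
          rw [← ez]
          exact Finset.mem_insert.2 (Or.inr (Finset.mem_insert.2 (Or.inr
            (Finset.mem_image_of_mem _ hg'))))
        have hrep2 : rep h0 g' ∈ c₂ := by
          rw [← ez']
          exact Finset.mem_insert.2 (Or.inr (Finset.mem_insert.2 (Or.inr
            (Finset.mem_image_of_mem _ hg'))))
        exact hCc g' hg'G _ (rep_mem h0 (hE0 g' (hGC g' hg'G))) hrep1 hrep2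
      · -- G = {g₀} and k = 3 : use the extra 2-edge hypothesis
        have hk3 : k = 3 := by omega
        rcases hextra with hk4 | ⟨e, heE, hezz, he2⟩
        · omega
        -- the core of the 2-edge e lies in C and has card 1
        have hcore : ∃ ce ∈ C, ce.card = 1 := by
          rcases hezz with hu' | hv'
          · have hvne : v ∉ e := by
              intro hc
              have : e ∈ E.filter (fun h => u ∈ h ∧ v ∈ h) := Finset.mem_filter.2 ⟨heE, hu', hc⟩
              rw [hshared] at this; exact absurd this (Finset.notMem_empty _)
            refine ⟨e.erase u, mem_cores_iff.2 (Or.inl ⟨e, heE, hu', hvne, rfl⟩), ?_⟩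
            rw [Finset.card_erase_of_mem hu', he2]
          · have hune : u ∉ e := by
              intro hc
              have : e ∈ E.filter (fun h => u ∈ h ∧ v ∈ h) := Finset.mem_filter.2 ⟨heE, hc, hv'⟩
              rw [hshared] at this; exact absurd this (Finset.notMem_empty _)
            refine ⟨e.erase v, mem_cores_iff.2 (Or.inr ⟨e, heE, hv', hune, rfl⟩), ?_⟩
            rw [Finset.card_erase_of_mem hv', he2]
        obtain ⟨ce, hceC, hce1⟩ := hcore
        -- C = {c₁, c₂, g₀} and all have card 2
        have hc₁card : c₁.card = 2 := by
          rw [← ez, hScards g₀ hg₀ z hz, hk3]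
        have hc₂card : c₂.card = 2 := by
          rw [← ez', hScards g₀ hg₀ z' hz', hk3]
        rcases hdecomp ce hceC with rfl | hcc
        · omega
        rcases hcc with rfl | hceG
        · omega
        · have := hbig ce hceG
          have hcnon := Finset.card_pos.2 (hE0 ce (hGC ce hceG))
          -- ce ∈ G with card 1; but G = {g₀} since G.card = 1
          have hGone : G.card = 1 := by omega
          obtain ⟨a, ha⟩ := Finset.card_eq_one.1 hGone
          have h1 : ce = a := by rw [ha] at hceG; exact Finset.mem_singleton.1 hceG
          have h2' : g₀ = a := by rw [ha] at hg₀; exact Finset.mem_singleton.1 hg₀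
          rw [h1, ← h2', hg2] at hce1
          omega
    rcases hkey g₀ hg₀ y hy with e1 | e1 <;> rcases hkey g₀ hg₀ y' hy' with e2 | e2
    · exact hyy' (hSinj g₀ hg₀ y hy y' hy' (e1.trans e2.symm))
    · exact main y y' hy hy' e1 e2
    · exact main y' y hy' hy e2 e1
    · exact hyy' (hSinj g₀ hg₀ y hy y' hy' (e1.trans e2.symm))
  push_neg at htwo
  -- final case : all cores of G are singletons
  have hall1 : ∀ g ∈ G, g.card = 1 := by
    intro g hg
    have h1 := Finset.card_pos.2 (hE0 g (hGC g hg))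
    have h2 := hbig g hg
    have h3 := htwo g hg
    omega
  obtain ⟨g₀, hg₀⟩ := hGnon
  have hy : rep h0 g₀ ∈ g₀ := rep_mem h0 (hE0 g₀ (hGC g₀ hg₀))
  set y := rep h0 g₀ with hydef
  -- helper numeric lemma: a vertex in a 2-edge with small sig has degree 1
  have ht_eq : ((k:ℚ) + 2) / (2 * k) = 1/2 + 1/k := by field_simp
  have numeric : ∀ z : Fin n, ∀ hz_e : Finset (Fin n), hz_e ∈ E → z ∈ hz_e →
      sig E z < (k + 2) / (2 * k) → hz_e.card = 2 → hdeg E z = 1 := by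
    intro z hz_e hzE hzz hz_sig hz2
    have hd1 : 1 ≤ hdeg E z := by
      have h1 : hz_e ∈ E.filter (fun h => z ∈ h) := Finset.mem_filter.2 ⟨hzE, hzz⟩
      have h2 := Finset.card_pos.2 ⟨hz_e, h1⟩
      unfold hdeg; omega
    by_contra hd
    have hd2 : 2 ≤ hdeg E z := by omega
    have hs := sig_ge_edge hk0 hcardle hne hzE hzz
    rw [hz2] at hs
    have hcast : (2:ℚ) ≤ (hdeg E z : ℚ) := by exact_mod_cast hd2
    have h1k : (1:ℚ)/k ≤ ((hdeg E z : ℚ) - 1)/k := by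
      rw [div_le_div_iff₀ hkQ hkQ]; nlinarith
    rw [ht_eq] at hz_sig
    norm_num at hs
    linarith
  -- helper : deg = k-1 at a vertex with an edge forces sig ≥ (k-1)/k , impossible for k ≥ 4
  have bigdeg : ∀ z : Fin n, ∀ hz_e : Finset (Fin n), hz_e ∈ E → z ∈ hz_e →
      sig E z < (k + 2) / (2 * k) → hdeg E z = k - 1 → 4 ≤ k → False := by
    intro z hz_e hzE hzz hz_sig hdz hk4
    have hs := sig_ge_edge hk0 hcardle hne hzE hzz
    have hz_card : 0 < hz_e.card := Finset.card_pos.2 ⟨z, hzz⟩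
    have hz_cardk : hz_e.card ≤ k := hcardle _ hzE
    have h1k : (1:ℚ)/k ≤ 1/(hz_e.card : ℚ) := by
      apply one_div_le_one_div_of_le
      · exact_mod_cast hz_card
      · exact_mod_cast hz_cardk
    have hdz' : ((hdeg E z : ℚ)) = (k:ℚ) - 1 := by
      rw [hdz, Nat.cast_sub (by omega)]; norm_num
    have hkge4 : (4:ℚ) ≤ k := by exact_mod_cast hk4
    rw [hdz'] at hs
    have hstep : ((k:ℚ)+2)/(2*k) ≤ 1/k + ((k:ℚ)-1-1)/k := by
      rw [← add_div, div_le_div_iff₀ (by positivity) hkQ]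
      nlinarith
    linarith
  -- helper : two edges at z, one of card 2, with k = 3 gives a contradiction
  have twoedges3 : ∀ z : Fin n, ∀ e₁ e₂ : Finset (Fin n), e₁ ∈ E → e₂ ∈ E → e₁ ≠ e₂ →
      z ∈ e₁ → z ∈ e₂ → sig E z < (k + 2) / (2 * k) → e₂.card = 2 → k = 3 → False := by
    intro z e₁ e₂ h1E' h2E' hne' hz1 hz2 hz_sig he2 hk3
    have hs := sig_ge_two h1E' h2E' hne' hz1 hz2
    rw [he2] at hs
    have hz_card : 0 < e₁.card := Finset.card_pos.2 ⟨z, hz1⟩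
    have hz_cardk : e₁.card ≤ k := hcardle _ h1E'
    have h1k : (1:ℚ)/k ≤ 1/(e₁.card : ℚ) := by
      apply one_div_le_one_div_of_le
      · exact_mod_cast hz_card
      · exact_mod_cast hz_cardk
    rw [ht_eq] at hz_sig
    rw [hk3] at h1k hz_sig
    norm_num at h1k hz_sig hs
    linarith
  -- the two symmetric endgames
  rcases hkey g₀ hg₀ y hy with e1 | e1
  · -- the transversal equals c₁
    have hrepc : ∀ g ∈ G, rep h0 g ∈ c₁ := by
      intro g hg
      by_cases hgg : g = g₀
      · subst hgg; rw [← e1]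
        exact Finset.mem_insert.2 (Or.inr (Finset.mem_insert_self _ _))
      · rw [← e1]
        exact Finset.mem_insert.2 (Or.inr (Finset.mem_insert.2 (Or.inr
          (Finset.mem_image_of_mem _ (Finset.mem_erase.2 ⟨hgg, hg⟩)))))
    by_cases hzz : ∃ z ∈ c₂, z ≠ w
    · obtain ⟨z, hzc₂, hzw⟩ := hzz
      set T' := insert z (G.image (rep h0)) with hT'
      have hzim : z ∉ G.image (rep h0) := by
        intro hc
        obtain ⟨g, hgG, hgz⟩ := Finset.mem_image.1 hc
        exact hCc g hgG z (hgz ▸ rep_mem h0 (hE0 g (hGC g hgG))) (hgz ▸ hrepc g hgG) hzc₂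
      have hT'card : T'.card = k - 1 := by
        rw [hT', Finset.card_insert_of_notMem hzim, hrepinj G (Finset.Subset.refl G), hGcard]
        omega
      have hwT' : w ∉ T' := by
        intro hc
        rcases Finset.mem_insert.1 hc with h' | h'
        · exact hzw h'.symm
        · obtain ⟨g, hgG, hgz⟩ := Finset.mem_image.1 h'
          exact hA g hgG (hgz ▸ rep_mem h0 (hE0 g (hGC g hgG)))
      have hmemT : ∀ x ∈ T', ∃ c ∈ C, x ∈ c := by
        intro x hx
        rcases Finset.mem_insert.1 hx with rfl | hx'
        · exact ⟨c₂, hc₂C, hzc₂⟩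
        · obtain ⟨g, hgG, rfl⟩ := Finset.mem_image.1 hx'
          exact ⟨g, hGC g hgG, rep_mem h0 (hE0 g (hGC g hgG))⟩
      obtain ⟨huT, hvT⟩ := not_mem_uv_of_cores hmemT
      have hhits : ∀ c ∈ C, (c ∩ T').Nonempty := by
        intro c hc
        rcases hdecomp c hc with rfl | hcc
        · exact ⟨rep h0 g₀, Finset.mem_inter.2 ⟨hrepc g₀ hg₀,
            Finset.mem_insert.2 (Or.inr (Finset.mem_image_of_mem _ hg₀))⟩⟩
        rcases hcc with rfl | hcG
        · exact ⟨z, Finset.mem_inter.2 ⟨hzc₂, Finset.mem_insert_self _ _⟩⟩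
        · exact ⟨rep h0 c, Finset.mem_inter.2 ⟨rep_mem h0 (hE0 c (hGC c hcG)),
            Finset.mem_insert.2 (Or.inr (Finset.mem_image_of_mem _ hcG))⟩⟩
      obtain ⟨c, hcC, hcc⟩ := swap_lemma hk hcardle hdet huv hT'card huT hvT
      rcases hcc with hemp | heq
      · obtain ⟨x, hx⟩ := hhits c hcC
        rw [hemp] at hx; exact absurd hx (Finset.notMem_empty x)
      rcases hdecomp c hcC with h1' | hcc2
      · apply hwT'; rw [← heq, h1']; exact hwc₁
      rcases hcc2 with h2' | hcG
      · apply hwT'; rw [← heq, h2']; exact hwc₂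
      · have h5 := hall1 c hcG
        rw [heq, hT'card] at h5
        omega
    · push_neg at hzz
      have hc₂w : c₂ = {w} := Finset.eq_singleton_iff_unique_mem.2 ⟨hwc₂, hzz⟩
      have hhv2 : hv_e.card = 2 := by
        have h1 := Finset.card_erase_of_mem h2v
        have h2' : c₂.card = 1 := by rw [hc₂w]; simp
        rw [hc₂def] at h2'
        have h3 : 0 < hv_e.card := Finset.card_pos.2 ⟨v, h2v⟩
        omega
      have hdv1 : hdeg E v = 1 := numeric v hv_e h2E h2v hv_sig hhv2
      have hdu : hdeg E u = k - 1 := by omega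
      by_cases hk4 : 4 ≤ k
      · exact bigdeg u hu_e h1E h1u hu_sig hdu hk4
      · have hk3 : k = 3 := by omega
        have hg₀C : g₀ ∈ C := hGC _ hg₀
        rcases mem_cores_iff.1 hg₀C with ⟨e, heE, heu, hev, herase⟩ |
          ⟨e, heE, hev', heu', herase⟩
        · -- u-side : e is a 2-edge at u, distinct from hu_e
          have hg₀1 : g₀.card = 1 := hall1 g₀ hg₀
          have he2 : e.card = 2 := by
            have h1 := Finset.card_erase_of_mem heu
            rw [herase] at h1
            have h2' := Finset.card_pos.2 ⟨u, heu⟩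
            omega
          have hne_e : hu_e ≠ e := by
            intro hcc
            apply (hGne g₀ hg₀).1
            rw [← herase, ← hcc, hc₁def]
          exact twoedges3 u hu_e e h1E heE hne_e h1u heu hu_sig he2 hk3
        · -- v-side : e must be hv_e, so g₀ = c₂, contradiction
          have hfil : (E.filter (fun h => v ∈ h)).card = 1 := hdv1
          obtain ⟨a, ha⟩ := Finset.card_eq_one.1 hfil
          have hea : e = a := by
            have h1 : e ∈ E.filter (fun h => v ∈ h) := Finset.mem_filter.2 ⟨heE, hev'⟩
            rw [ha] at h1; exact Finset.mem_singleton.1 h1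
          have hva : hv_e = a := by
            have h1 : hv_e ∈ E.filter (fun h => v ∈ h) := Finset.mem_filter.2 ⟨h2E, h2v⟩
            rw [ha] at h1; exact Finset.mem_singleton.1 h1
          apply (hGne g₀ hg₀).2
          rw [← herase, hea, ← hva, hc₂def]
  · -- symmetric : the transversal equals c₂
    have hrepc : ∀ g ∈ G, rep h0 g ∈ c₂ := by
      intro g hg
      by_cases hgg : g = g₀
      · subst hgg; rw [← e1]
        exact Finset.mem_insert.2 (Or.inr (Finset.mem_insert_self _ _))
      · rw [← e1]
        exact Finset.mem_insert.2 (Or.inr (Finset.mem_insert.2 (Or.inr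
          (Finset.mem_image_of_mem _ (Finset.mem_erase.2 ⟨hgg, hg⟩)))))
    by_cases hzz : ∃ z ∈ c₁, z ≠ w
    · obtain ⟨z, hzc₁, hzw⟩ := hzz
      set T' := insert z (G.image (rep h0)) with hT'
      have hzim : z ∉ G.image (rep h0) := by
        intro hc
        obtain ⟨g, hgG, hgz⟩ := Finset.mem_image.1 hc
        exact hCc g hgG z (hgz ▸ rep_mem h0 (hE0 g (hGC g hgG))) hzc₁ (hgz ▸ hrepc g hgG)
      have hT'card : T'.card = k - 1 := by
        rw [hT', Finset.card_insert_of_notMem hzim, hrepinj G (Finset.Subset.refl G), hGcard]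
        omega
      have hwT' : w ∉ T' := by
        intro hc
        rcases Finset.mem_insert.1 hc with h' | h'
        · exact hzw h'.symm
        · obtain ⟨g, hgG, hgz⟩ := Finset.mem_image.1 h'
          exact hA g hgG (hgz ▸ rep_mem h0 (hE0 g (hGC g hgG)))
      have hmemT : ∀ x ∈ T', ∃ c ∈ C, x ∈ c := by
        intro x hx
        rcases Finset.mem_insert.1 hx with rfl | hx'
        · exact ⟨c₁, hc₁C, hzc₁⟩
        · obtain ⟨g, hgG, rfl⟩ := Finset.mem_image.1 hx'
          exact ⟨g, hGC g hgG, rep_mem h0 (hE0 g (hGC g hgG))⟩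
      obtain ⟨huT, hvT⟩ := not_mem_uv_of_cores hmemT
      have hhits : ∀ c ∈ C, (c ∩ T').Nonempty := by
        intro c hc
        rcases hdecomp c hc with rfl | hcc
        · exact ⟨z, Finset.mem_inter.2 ⟨hzc₁, Finset.mem_insert_self _ _⟩⟩
        rcases hcc with rfl | hcG
        · exact ⟨rep h0 g₀, Finset.mem_inter.2 ⟨hrepc g₀ hg₀,
            Finset.mem_insert.2 (Or.inr (Finset.mem_image_of_mem _ hg₀))⟩⟩
        · exact ⟨rep h0 c, Finset.mem_inter.2 ⟨rep_mem h0 (hE0 c (hGC c hcG)),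
            Finset.mem_insert.2 (Or.inr (Finset.mem_image_of_mem _ hcG))⟩⟩
      obtain ⟨c, hcC, hcc⟩ := swap_lemma hk hcardle hdet huv hT'card huT hvT
      rcases hcc with hemp | heq
      · obtain ⟨x, hx⟩ := hhits c hcC
        rw [hemp] at hx; exact absurd hx (Finset.notMem_empty x)
      rcases hdecomp c hcC with h1' | hcc2
      · apply hwT'; rw [← heq, h1']; exact hwc₁
      rcases hcc2 with h2' | hcG
      · apply hwT'; rw [← heq, h2']; exact hwc₂
      · have h5 := hall1 c hcG
        rw [heq, hT'card] at h5
        omega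
    · push_neg at hzz
      have hc₁w : c₁ = {w} := Finset.eq_singleton_iff_unique_mem.2 ⟨hwc₁, hzz⟩
      have hhu2 : hu_e.card = 2 := by
        have h1 := Finset.card_erase_of_mem h1u
        have h2' : c₁.card = 1 := by rw [hc₁w]; simp
        rw [hc₁def] at h2'
        have h3 : 0 < hu_e.card := Finset.card_pos.2 ⟨u, h1u⟩
        omega
      have hdu1 : hdeg E u = 1 := numeric u hu_e h1E h1u hu_sig hhu2
      have hdv : hdeg E v = k - 1 := by omega
      by_cases hk4 : 4 ≤ k
      · exact bigdeg v hv_e h2E h2v hv_sig hdv hk4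
      · have hk3 : k = 3 := by omega
        have hg₀C : g₀ ∈ C := hGC _ hg₀
        rcases mem_cores_iff.1 hg₀C with ⟨e, heE, heu, hev, herase⟩ |
          ⟨e, heE, hev', heu', herase⟩
        · -- u-side : e must be hu_e, so g₀ = c₁, contradiction
          have hfil : (E.filter (fun h => u ∈ h)).card = 1 := hdu1
          obtain ⟨a, ha⟩ := Finset.card_eq_one.1 hfil
          have hea : e = a := by
            have h1 : e ∈ E.filter (fun h => u ∈ h) := Finset.mem_filter.2 ⟨heE, heu⟩
            rw [ha] at h1; exact Finset.mem_singleton.1 h1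
          have hua : hu_e = a := by
            have h1 : hu_e ∈ E.filter (fun h => u ∈ h) := Finset.mem_filter.2 ⟨h1E, h1u⟩
            rw [ha] at h1; exact Finset.mem_singleton.1 h1
          apply (hGne g₀ hg₀).1
          rw [← herase, hea, ← hua, hc₁def]
        · -- v-side : e is a 2-edge at v, distinct from hv_e
          have hg₀1 : g₀.card = 1 := hall1 g₀ hg₀
          have he2 : e.card = 2 := by
            have h1 := Finset.card_erase_of_mem hev'
            rw [herase] at h1
            have h2' := Finset.card_pos.2 ⟨v, hev'⟩
            omega
          have hne_e : hv_e ≠ e := by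
            intro hcc
            apply (hGne g₀ hg₀).2
            rw [← herase, ← hcc, hc₂def]
          exact twoedges3 v hv_e e h2E heE hne_e h2v hev' hv_sig he2 hk3


noncomputable def tq (k : ℕ) : ℚ := ((k:ℚ) + 2) / (2 * k)

lemma tq_eq (hk0 : 0 < k) : tq k = 1/2 + 1/k := by
  have h : (k:ℚ) ≠ 0 := ne_of_gt (by exact_mod_cast hk0)
  unfold tq; field_simp

/-- a deficient vertex has no singleton edge -/
lemma singleton_not_mem (hk : 3 ≤ k) {E : Finset (Finset (Fin n))}
    (hcardle : ∀ h ∈ E, h.card ≤ k) (hne : ∀ h ∈ E, h.Nonempty)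
    {u : Fin n} (hu : sig E u < tq k) : ({u} : Finset (Fin n)) ∉ E := by
  intro hmem
  have hk0 : 0 < k := by omega
  have hs := sig_ge_edge hk0 hcardle hne hmem (Finset.mem_singleton_self u)
  rw [Finset.card_singleton] at hs
  norm_num at hs
  have hd1 : 1 ≤ hdeg E u := by
    have h1 : ({u}:Finset (Fin n)) ∈ E.filter (fun h => u ∈ h) :=
      Finset.mem_filter.2 ⟨hmem, Finset.mem_singleton_self u⟩
    have := Finset.card_pos.2 ⟨_, h1⟩
    unfold hdeg; omega
  have hd1' : (1:ℚ) ≤ (hdeg E u : ℚ) := by exact_mod_cast hd1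
  have hkQ : (0:ℚ) < k := by exact_mod_cast hk0
  have h1 : (1:ℚ) ≤ sig E u := by
    have h0le : (0:ℚ) ≤ ((hdeg E u : ℚ) - 1)/k := by
      apply div_nonneg _ (le_of_lt hkQ); linarith
    linarith
  have h2 : tq k < 1 := by
    unfold tq
    rw [div_lt_one (by positivity)]
    have : (3:ℚ) ≤ k := by exact_mod_cast hk
    linarith
  linarith

/-- facts about a "deficient pair" -/
lemma def_pair (hk : 3 ≤ k) (hn : 3 * k ≤ n) {E : Finset (Finset (Fin n))}
    (hcardle : ∀ h ∈ E, h.card ≤ k) (hne : ∀ h ∈ E, h.Nonempty)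
    (hdet : Detectable k k E) {u v : Fin n} (huv : u ≠ v)
    (hu : sig E u < tq k) (hv : sig E v < tq k) :
    E.filter (fun h => u ∈ h ∧ v ∈ h) = ∅ ∧ k ≤ hdeg E u + hdeg E v ∧
      hdeg E u + hdeg E v ≤ k + 1 := by
  have hk0 : 0 < k := by omega
  have hkQ : (0:ℚ) < k := by exact_mod_cast hk0
  have hkne : (k:ℚ) ≠ 0 := ne_of_gt hkQ
  have hsu := singleton_not_mem hk hcardle hne hu
  have hsv := singleton_not_mem hk hcardle hne hv
  have hC := pair_lemma hk hn hcardle hdet huv (cores_nonempty hsu hsv)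
  have hsp := sig_pair hk0 hcardle hne u v
  have h2t : sig E u + sig E v < ((k:ℚ) + 2)/k := by
    have ht2 : tq k + tq k = ((k:ℚ)+2)/k := by
      unfold tq; field_simp; ring
    linarith
  have hs0 : E.filter (fun h => u ∈ h ∧ v ∈ h) = ∅ := by
    by_contra hcon
    have hpos : 0 < (E.filter (fun h => u ∈ h ∧ v ∈ h)).card :=
      Finset.card_pos.2 (Finset.nonempty_iff_ne_empty.2 hcon)
    have hAB : ((k:ℚ)+2) ≤ ((cores E u v).card:ℚ) +
        2*((E.filter (fun h => u ∈ h ∧ v ∈ h)).card:ℚ) := by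
      have h1 : k + 2 ≤ (cores E u v).card +
          2*(E.filter (fun h => u ∈ h ∧ v ∈ h)).card := by omega
      exact_mod_cast h1
    have key : ((k:ℚ)+2)/k ≤ (((cores E u v).card:ℚ) +
        2*((E.filter (fun h => u ∈ h ∧ v ∈ h)).card:ℚ))/k := by gcongr
    have hsplit : (((cores E u v).card:ℚ) +
        2*((E.filter (fun h => u ∈ h ∧ v ∈ h)).card:ℚ))/k =
        ((cores E u v).card:ℚ)/k +
        2*((E.filter (fun h => u ∈ h ∧ v ∈ h)).card:ℚ)/k := by ring
    rw [hsplit] at key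
    linarith
  refine ⟨hs0, ?_, ?_⟩
  · have h1 := cores_card_le_sum E u v
    have h2 := hdeg_split E u v
    have h3 := hdeg_split E v u
    have h4 : E.filter (fun h => v ∈ h ∧ u ∈ h) = ∅ := by
      rw [← hs0]; apply Finset.filter_congr; intro h _; exact by tauto
    rw [hs0] at h2; rw [h4] at h3
    simp only [Finset.card_empty, zero_add] at h2 h3
    omega
  · have b1 := sig_ge_deg hk0 hcardle hne u
    have b2 := sig_ge_deg hk0 hcardle hne v
    by_contra hcon
    push_neg at hcon
    have hq : ((k:ℚ) + 2) ≤ ((hdeg E u : ℚ) + (hdeg E v : ℚ)) := by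
      have h1 : k + 2 ≤ hdeg E u + hdeg E v := by omega
      exact_mod_cast h1
    have h5 : ((k:ℚ)+2)/k ≤ ((hdeg E u:ℚ) + (hdeg E v:ℚ))/k := by gcongr
    have hb : ((hdeg E u:ℚ))/k + ((hdeg E v:ℚ))/k =
        ((hdeg E u:ℚ) + (hdeg E v:ℚ))/k := by rw [← add_div]
    linarith

/-- the neighbour-surplus lemma -/
lemma neighbor_surplus (hk : 3 ≤ k) (hn : 3 * k ≤ n) {E : Finset (Finset (Fin n))}
    (hcardle : ∀ h ∈ E, h.card ≤ k) (hne : ∀ h ∈ E, h.Nonempty)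
    (hdet : Detectable k k E) {u w : Fin n} (huw : u ≠ w)
    (hu : sig E u < tq k) {h₀ : Finset (Fin n)} (hh₀ : h₀ ∈ E)
    (huh : u ∈ h₀) (hwh : w ∈ h₀) :
    2 * tq k ≤ sig E u + sig E w := by
  have hk0 : 0 < k := by omega
  have hkQ : (0:ℚ) < k := by exact_mod_cast hk0
  have hkne : (k:ℚ) ≠ 0 := ne_of_gt hkQ
  have hsu := singleton_not_mem hk hcardle hne hu
  have h2t : 2 * tq k = ((k:ℚ)+2)/k := by unfold tq; field_simp
  by_cases hsw : ({w} : Finset (Fin n)) ∈ E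
  · have hne0 : ({w}:Finset (Fin n)) ≠ h₀ := by
      intro hc
      have : u ∈ ({w}:Finset (Fin n)) := hc ▸ huh
      exact huw (Finset.mem_singleton.1 this)
    have hs1 := sig_ge_two hsw hh₀ hne0 (Finset.mem_singleton_self w) hwh
    rw [Finset.card_singleton] at hs1
    simp only [Nat.cast_one, one_div_one] at hs1
    have hs2 := sig_ge_edge hk0 hcardle hne hh₀ huh
    have hcard : 0 < h₀.card := Finset.card_pos.2 ⟨u, huh⟩
    have hcardk : h₀.card ≤ k := hcardle _ hh₀
    have h1k : (1:ℚ)/k ≤ 1/(h₀.card:ℚ) := by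
      apply one_div_le_one_div_of_le
      · exact_mod_cast hcard
      · exact_mod_cast hcardk
    have hd1 : 1 ≤ hdeg E u := by
      have h1 : h₀ ∈ E.filter (fun h => u ∈ h) := Finset.mem_filter.2 ⟨hh₀, huh⟩
      have := Finset.card_pos.2 ⟨_, h1⟩
      unfold hdeg; omega
    have hd1' : (1:ℚ) ≤ (hdeg E u : ℚ) := by exact_mod_cast hd1
    have hu1k : (1:ℚ)/k ≤ sig E u := by
      have h0le : (0:ℚ) ≤ ((hdeg E u:ℚ) - 1)/k := by
        apply div_nonneg _ (le_of_lt hkQ); linarith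
      linarith
    rw [h2t]
    have hexp : ((k:ℚ)+2)/k = 1 + 1/k + 1/k := by field_simp; ring
    rw [hexp]
    linarith
  · have hC := pair_lemma hk hn hcardle hdet huw (cores_nonempty hsu hsw)
    have hsp := sig_pair hk0 hcardle hne u w
    have hs1 : 1 ≤ (E.filter (fun h => u ∈ h ∧ w ∈ h)).card :=
      Finset.card_pos.2 ⟨h₀, Finset.mem_filter.2 ⟨hh₀, huh, hwh⟩⟩
    have hAB : ((k:ℚ)+2) ≤ ((cores E u w).card:ℚ) +
        2*((E.filter (fun h => u ∈ h ∧ w ∈ h)).card:ℚ) := by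
      have h1 : k + 2 ≤ (cores E u w).card +
          2*(E.filter (fun h => u ∈ h ∧ w ∈ h)).card := by omega
      exact_mod_cast h1
    have key : ((k:ℚ)+2)/k ≤ (((cores E u w).card:ℚ) +
        2*((E.filter (fun h => u ∈ h ∧ w ∈ h)).card:ℚ))/k := by gcongr
    have hsplit : (((cores E u w).card:ℚ) +
        2*((E.filter (fun h => u ∈ h ∧ w ∈ h)).card:ℚ))/k =
        ((cores E u w).card:ℚ)/k +
        2*((E.filter (fun h => u ∈ h ∧ w ∈ h)).card:ℚ)/k := by ring
    rw [hsplit] at key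
    rw [h2t]
    linarith

set_option maxHeartbeats 2000000 in
/-- The per-vertex charging inequality. -/
lemma perw (hk : 3 ≤ k) (hn : 3 * k ≤ n) {E : Finset (Finset (Fin n))}
    (hne : ∀ h ∈ E, h.Nonempty) (hcardle : ∀ h ∈ E, h.card ≤ k)
    (hdet : Detectable k k E) {w : Fin n} (hw : ¬ sig E w < tq k) :
    tq k + ∑ u ∈ (Finset.univ.filter (fun v => sig E v < tq k)).filter
        (fun u => w ∈ nbr E u), (tq k - sig E u) / ((nbr E u).card : ℚ) ≤ sig E w := by
  have hk0 : 0 < k := by omega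
  have hkQ : (0:ℚ) < k := by exact_mod_cast hk0
  set D := Finset.univ.filter (fun v : Fin n => sig E v < tq k) with hD
  set R := D.filter (fun u => w ∈ nbr E u) with hR
  have hRprop : ∀ u ∈ R, sig E u < tq k ∧ w ∈ nbr E u := by
    intro u hu
    rw [hR, Finset.mem_filter] at hu
    refine ⟨?_, hu.2⟩
    have := hu.1
    rw [hD, Finset.mem_filter] at this
    exact this.2
  -- choose a shared edge for every member of R
  have hex : ∀ u : Fin n, ∃ h : Finset (Fin n), u ∈ R → (h ∈ E ∧ u ∈ h ∧ w ∈ h) := by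
    intro u
    by_cases hu : u ∈ R
    · obtain ⟨hwu, h, hhE, huh, hwh⟩ := mem_nbr.1 (hRprop u hu).2
      exact ⟨h, fun _ => ⟨hhE, huh, hwh⟩⟩
    · exact ⟨∅, fun hc => absurd hc hu⟩
  choose f hf using hex
  have hfE : ∀ u ∈ R, f u ∈ E := fun u hu => (hf u hu).1
  have hfu : ∀ u ∈ R, u ∈ f u := fun u hu => (hf u hu).2.1
  have hfw : ∀ u ∈ R, w ∈ f u := fun u hu => (hf u hu).2.2
  have hwne : ∀ u ∈ R, u ≠ w := fun u hu => (mem_nbr.1 (hRprop u hu).2).1.symm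
  have hfcard2 : ∀ u ∈ R, 2 ≤ (f u).card :=
    fun u hu => Finset.one_lt_card.2 ⟨u, hfu u hu, w, hfw u hu, hwne u hu⟩
  have hNpos : ∀ u ∈ R, 0 < (nbr E u).card := by
    intro u hu
    have := nbr_card_ge E (hfE u hu) (hfu u hu)
    have := hfcard2 u hu
    omega
  have hsurp : ∀ u ∈ R, tq k - sig E u ≤ sig E w - tq k := by
    intro u hu
    have := neighbor_surplus hk hn hcardle hne hdet (hwne u hu) (hRprop u hu).1
      (hfE u hu) (hfu u hu) (hfw u hu)
    linarith
  have hdpos : ∀ u ∈ R, 0 ≤ tq k - sig E u := by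
    intro u hu
    have := (hRprop u hu).1
    linarith
  have hsw : tq k ≤ sig E w := not_lt.1 hw
  -- trivial cases r = 0, 1
  rcases Nat.lt_or_ge R.card 2 with hr2 | hr2
  · interval_cases hcc : R.card
    · rw [Finset.card_eq_zero.1 hcc, Finset.sum_empty]
      linarith
    · obtain ⟨u, hu⟩ := Finset.card_eq_one.1 hcc
      rw [hu, Finset.sum_singleton]
      have huR : u ∈ R := by rw [hu]; exact Finset.mem_singleton_self u
      have h1 : (tq k - sig E u) / ((nbr E u).card : ℚ) ≤ tq k - sig E u := by
        apply div_le_self (hdpos u huR)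
        have := hNpos u huR
        exact_mod_cast this
      have := hsurp u huR
      linarith
  -- main case r ≥ 2
  have hpairs : ∀ u ∈ R, ∀ u' ∈ R, u ≠ u' →
      E.filter (fun h => u ∈ h ∧ u' ∈ h) = ∅ ∧ k ≤ hdeg E u + hdeg E u' ∧
        hdeg E u + hdeg E u' ≤ k + 1 := by
    intro u hu u' hu' hne'
    exact def_pair hk hn hcardle hne hdet hne' (hRprop u hu).1 (hRprop u' hu').1
  have hfinj : ∀ u ∈ R, ∀ u' ∈ R, f u = f u' → u = u' := by
    intro u hu u' hu' heq
    by_contra hne'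
    have h1 : f u ∈ E.filter (fun h => u ∈ h ∧ u' ∈ h) :=
      Finset.mem_filter.2 ⟨hfE u hu, hfu u hu, heq ▸ hfu u' hu'⟩
    rw [(hpairs u hu u' hu' hne').1] at h1
    exact absurd h1 (Finset.notMem_empty _)
  have himg : ∑ h ∈ R.image f, (1:ℚ)/(h.card:ℚ) = ∑ u ∈ R, (1:ℚ)/((f u).card:ℚ) :=
    Finset.sum_image (fun x hx y hy h => hfinj x hx y hy h)
  have hQw : ∑ u ∈ R, 1/((f u).card : ℚ) ≤ sig E w := by
    rw [← himg]
    unfold sig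
    apply Finset.sum_le_sum_of_subset_of_nonneg
    · intro h hh
      obtain ⟨u, huR, rfl⟩ := Finset.mem_image.1 hh
      exact Finset.mem_filter.2 ⟨hfE u huR, hfw u huR⟩
    · intro h _ _
      positivity
  have hQr : (R.card : ℚ)/k ≤ ∑ u ∈ R, 1/((f u).card:ℚ) := by
    calc (R.card:ℚ)/k = ∑ _u ∈ R, (1:ℚ)/k := by
          rw [Finset.sum_const, nsmul_eq_mul]; ring
      _ ≤ _ := Finset.sum_le_sum (fun u hu => by
          apply one_div_le_one_div_of_le
          · exact_mod_cast Finset.card_pos.2 ⟨u, hfu u hu⟩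
          · exact_mod_cast hcardle _ (hfE u hu))
  have hdle : ∀ u ∈ R, 2 * hdeg E u ≤ k + 1 := by
    intro u hu
    by_contra hcon
    push_neg at hcon
    have h1 : ((k:ℚ)+2)/2 ≤ (hdeg E u : ℚ) := by
      have h2 : k + 2 ≤ 2 * hdeg E u := by omega
      have h3 : ((k:ℚ)+2) ≤ 2*(hdeg E u:ℚ) := by exact_mod_cast h2
      linarith
    have h2 := sig_ge_deg hk0 hcardle hne u
    have h3 := (hRprop u hu).1
    have h4 : tq k ≤ ((hdeg E u:ℚ))/k := by
      unfold tq
      rw [div_le_div_iff₀ (by positivity) hkQ]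
      nlinarith
    linarith
  by_cases hk4 : 4 ≤ k
  · -- general branch k ≥ 4
    have hdsum : ∀ u ∈ R, ∀ u' ∈ R, u ≠ u' → k + 1 ≤ hdeg E u + hdeg E u' := by
      intro u hu u' hu' hne'
      obtain ⟨hsh, hge, _⟩ := hpairs u hu u' hu' hne'
      rcases Nat.lt_or_ge (hdeg E u + hdeg E u') (k+1) with hlt | hge'
      · exfalso
        have heq : hdeg E u + hdeg E u' = k := by omega
        have hsu := singleton_not_mem hk hcardle hne (hRprop u hu).1
        have hsu' := singleton_not_mem hk hcardle hne (hRprop u' hu').1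
        exact sharing hk hn hne hcardle hdet hne' hsu hsu' heq hsh
          (hRprop u hu).1 (hRprop u' hu').1
          (hfE u hu) (hfE u' hu') (hfu u hu) (hfu u' hu') (hfw u hu) (hfw u' hu')
          (Ne.symm (hwne u hu)) (Ne.symm (hwne u' hu')) (Or.inl hk4)
      · exact hge'
    have hdeq : ∀ u ∈ R, 2 * hdeg E u = k + 1 := by
      intro u hu
      obtain ⟨a, ha, b, hb, hab⟩ := Finset.one_lt_card.1 hr2
      have hother : ∃ u' ∈ R, u' ≠ u := by
        by_cases hau : a = u
        · exact ⟨b, hb, fun h => hab (by rw [hau, h])⟩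
        · exact ⟨a, ha, hau⟩
      obtain ⟨u', hu', hne'⟩ := hother
      have h1 := hdsum u hu u' hu' (Ne.symm hne')
      have h2 := hdle u hu
      have h3 := hdle u' hu'
      omega
    have hsize : ∀ u ∈ R, ∀ h ∈ E, u ∈ h → 2*k < 3*h.card := by
      intro u hu h hh huh
      have h1 := sig_ge_edge hk0 hcardle hne hh huh
      have h2 := (hRprop u hu).1
      have hd := hdeq u hu
      have hdq : ((hdeg E u:ℚ) - 1) = ((k:ℚ)-1)/2 := by
        have h5 : (2*(hdeg E u):ℚ) = (k:ℚ)+1 := by exact_mod_cast hd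
        push_cast at h5
        linarith
      rw [hdq] at h1
      have e1 : ((k:ℚ)-1)/2/(k:ℚ) = ((k:ℚ)-1)/(2*k) := by ring
      rw [e1] at h1
      have e2 : tq k - ((k:ℚ)-1)/(2*k) = 3/(2*k) := by
        unfold tq; rw [div_sub_div_same]; norm_num
      have h3 : (1:ℚ)/h.card < 3/(2*k) := by linarith
      have hcpos : 0 < h.card := Finset.card_pos.2 ⟨u, huh⟩
      have h4 : (2*(k:ℚ)) < 3*(h.card:ℚ) := by
        rw [div_lt_div_iff₀ (by exact_mod_cast hcpos) (by positivity)] at h3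
        linarith
      exact_mod_cast h4
    have hNbig : ∀ u ∈ R, k + 3 ≤ 2 * (nbr E u).card := by
      intro u hu
      have hd := hdeq u hu
      have hd2 : 1 < (E.filter (fun h => u ∈ h)).card := by
        have : 2 ≤ hdeg E u := by omega
        unfold hdeg at this; omega
      obtain ⟨h₁, hh₁, h₂, hh₂, h12⟩ := Finset.one_lt_card.1 hd2
      obtain ⟨h₁E, uh₁⟩ := Finset.mem_filter.1 hh₁
      obtain ⟨h₂E, uh₂⟩ := Finset.mem_filter.1 hh₂
      rcases le_total h₁.card h₂.card with hle | hle
      · have hN := nbr_card_ge_two_edges E h₁E h₂E h12 uh₁ uh₂ hle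
        have hsz := hsize u hu h₁ h₁E uh₁
        omega
      · have hN := nbr_card_ge_two_edges E h₂E h₁E (Ne.symm h12) uh₂ uh₁ hle
        have hsz := hsize u hu h₂ h₂E uh₂
        omega
    have hδ : ∀ u ∈ R, tq k - sig E u ≤ 3/(2*(k:ℚ)) - 1/((f u).card:ℚ) := by
      intro u hu
      have h1 := sig_ge_edge hk0 hcardle hne (hfE u hu) (hfu u hu)
      have h2 := (hRprop u hu).1
      have hd := hdeq u hu
      have hdq : ((hdeg E u:ℚ) - 1) = ((k:ℚ)-1)/2 := by
        have h5 : (2*(hdeg E u):ℚ) = (k:ℚ)+1 := by exact_mod_cast hd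
        push_cast at h5
        linarith
      rw [hdq] at h1
      have e1 : ((k:ℚ)-1)/2/(k:ℚ) = ((k:ℚ)-1)/(2*k) := by ring
      rw [e1] at h1
      have e2 : tq k - ((k:ℚ)-1)/(2*k) = 3/(2*k) := by
        unfold tq; rw [div_sub_div_same]; norm_num
      linarith
    rcases le_or_gt (2*R.card) (k+3) with hrs | hrb
    · -- small r
      have hterm : ∀ u ∈ R, (tq k - sig E u)/((nbr E u).card:ℚ) ≤
          (sig E w - tq k)*(2/((k:ℚ)+3)) := by
        intro u hu
        have h1 := hsurp u hu
        have h3 := hdpos u hu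
        have hw0 : (0:ℚ) ≤ sig E w - tq k := by linarith
        have hNQ : ((k:ℚ)+3)/2 ≤ ((nbr E u).card:ℚ) := by
          have h2 : ((k:ℚ)+3) ≤ 2*((nbr E u).card:ℚ) := by exact_mod_cast hNbig u hu
          linarith
        have hpos2 : (0:ℚ) < ((k:ℚ)+3)/2 := by positivity
        calc (tq k - sig E u)/((nbr E u).card:ℚ)
            ≤ (sig E w - tq k)/(((k:ℚ)+3)/2) := by
              apply div_le_div₀ hw0 h1 hpos2 hNQ
          _ = (sig E w - tq k)*(2/((k:ℚ)+3)) := by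
              rw [div_div_eq_mul_div, mul_div_assoc]
      have hsum : ∑ u ∈ R, (tq k - sig E u)/((nbr E u).card:ℚ) ≤
          (R.card:ℚ) * ((sig E w - tq k)*(2/((k:ℚ)+3))) := by
        calc _ ≤ ∑ _u ∈ R, (sig E w - tq k)*(2/((k:ℚ)+3)) := Finset.sum_le_sum hterm
          _ = _ := by rw [Finset.sum_const, nsmul_eq_mul]
      have hfin : (R.card:ℚ) * ((sig E w - tq k)*(2/((k:ℚ)+3))) ≤ sig E w - tq k := by
        have hr3 : (2*(R.card:ℚ)) ≤ (k:ℚ)+3 := by exact_mod_cast hrs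
        have hw0 : (0:ℚ) ≤ sig E w - tq k := by linarith
        have hk3 : (0:ℚ) < (k:ℚ)+3 := by positivity
        have h1 : (R.card:ℚ)*(2/((k:ℚ)+3)) ≤ 1 := by
          have e : (R.card:ℚ)*(2/((k:ℚ)+3)) = 2*(R.card:ℚ)/((k:ℚ)+3) := by ring
          rw [e, div_le_one hk3]; linarith
        nlinarith
      linarith
    · -- big r
      have hterm : ∀ u ∈ R, (tq k - sig E u)/((nbr E u).card:ℚ) ≤
          (3/(2*(k:ℚ)) - 1/((f u).card:ℚ))*(2/((k:ℚ)+3)) := by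
        intro u hu
        have h1 := hδ u hu
        have h3 := hdpos u hu
        have hNQ : ((k:ℚ)+3)/2 ≤ ((nbr E u).card:ℚ) := by
          have h2 : ((k:ℚ)+3) ≤ 2*((nbr E u).card:ℚ) := by exact_mod_cast hNbig u hu
          linarith
        have hpos2 : (0:ℚ) < ((k:ℚ)+3)/2 := by positivity
        calc (tq k - sig E u)/((nbr E u).card:ℚ)
            ≤ (3/(2*(k:ℚ)) - 1/((f u).card:ℚ))/(((k:ℚ)+3)/2) := by
              apply div_le_div₀ (by linarith) h1 hpos2 hNQ
          _ = (3/(2*(k:ℚ)) - 1/((f u).card:ℚ))*(2/((k:ℚ)+3)) := by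
              rw [div_div_eq_mul_div, mul_div_assoc]
      have hsum : ∑ u ∈ R, (tq k - sig E u)/((nbr E u).card:ℚ) ≤
          ((R.card:ℚ)*(3/(2*(k:ℚ))) - ∑ u ∈ R, 1/((f u).card:ℚ))*(2/((k:ℚ)+3)) := by
        calc _ ≤ ∑ u ∈ R, (3/(2*(k:ℚ)) - 1/((f u).card:ℚ))*(2/((k:ℚ)+3)) :=
              Finset.sum_le_sum hterm
          _ = (∑ u ∈ R, (3/(2*(k:ℚ)) - 1/((f u).card:ℚ)))*(2/((k:ℚ)+3)) := by
              rw [← Finset.sum_mul]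
          _ = _ := by
              rw [Finset.sum_sub_distrib, Finset.sum_const, nsmul_eq_mul]
      set Q := ∑ u ∈ R, 1/((f u).card:ℚ) with hQdef
      have hQk : (R.card:ℚ) ≤ Q*k := by
        rw [← div_le_iff₀ hkQ]
        exact hQr
      have hrb' : ((k:ℚ)+3) < 2*(R.card:ℚ) := by exact_mod_cast hrb
      have hineq : ((k:ℚ)+2)*((k:ℚ)+3) + 6*(R.card:ℚ) ≤ Q*(2*k*((k:ℚ)+5)) := by
        have hkp : (0:ℚ) ≤ (k:ℚ)+2 := by positivity
        have hp1 : (0:ℚ) ≤ (2*(R.card:ℚ) - ((k:ℚ)+3)) := by linarith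
        nlinarith [mul_nonneg hp1 hkp, hQk]
      have hkey : tq k + ((R.card:ℚ)*(3/(2*(k:ℚ))) - Q)*(2/((k:ℚ)+3)) ≤ Q := by
        have hden : (0:ℚ) < 2*k*((k:ℚ)+3) := by positivity
        rw [← sub_nonneg]
        have expand : Q - (tq k + ((R.card:ℚ)*(3/(2*(k:ℚ))) - Q)*(2/((k:ℚ)+3)))
            = (Q*(2*k*((k:ℚ)+5)) - (((k:ℚ)+2)*((k:ℚ)+3) + 6*(R.card:ℚ))) /
              (2*k*((k:ℚ)+3)) := by
          unfold tq; field_simp; ring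
        rw [expand]
        apply div_nonneg _ (le_of_lt hden)
        linarith
      linarith
  · -- k = 3 branch
    have hk3 : k = 3 := by omega
    have htq3 : tq k = 5/6 := by rw [hk3]; unfold tq; norm_num
    have hkq3 : ((k:ℚ)) = 3 := by rw [hk3]; norm_num
    have hd12 : ∀ u ∈ R, hdeg E u = 1 ∨ hdeg E u = 2 := by
      intro u hu
      have h1 := hdle u hu
      have h2 : 1 ≤ hdeg E u := by
        have h3 : f u ∈ E.filter (fun h => u ∈ h) := Finset.mem_filter.2 ⟨hfE u hu, hfu u hu⟩
        have h4 := Finset.card_pos.2 ⟨_, h3⟩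
        unfold hdeg; omega
      omega
    have hedge3 : ∀ u ∈ R, hdeg E u = 2 → ∀ h ∈ E, u ∈ h → h.card = 3 := by
      intro u hu hd h hh huh
      have h1 := sig_ge_edge hk0 hcardle hne hh huh
      have h2 := (hRprop u hu).1
      have h3 := hcardle h hh
      have hcpos : 0 < h.card := Finset.card_pos.2 ⟨u, huh⟩
      have hd' : ((hdeg E u:ℚ)) = 2 := by rw [hd]; norm_num
      rw [hd', hkq3] at h1
      rw [htq3] at h2
      have h4 : (1:ℚ)/h.card < 1/2 := by linarith
      have h5 : (2:ℚ) < (h.card:ℚ) := by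
        rw [div_lt_div_iff₀ (by exact_mod_cast hcpos) (by norm_num)] at h4
        linarith
      have h6 : 2 < h.card := by exact_mod_cast h5
      omega
    have hsig23 : ∀ u ∈ R, hdeg E u = 2 → sig E u = 2/3 := by
      intro u hu hd
      unfold sig
      have hcongr : ∀ h ∈ E.filter (fun h => u ∈ h), (1:ℚ)/(h.card:ℚ) = 1/((3:ℕ):ℚ) := by
        intro h hh
        obtain ⟨hhE, huh⟩ := Finset.mem_filter.1 hh
        rw [hedge3 u hu hd h hhE huh]
      rw [Finset.sum_congr rfl hcongr, Finset.sum_const]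
      have hdd : (E.filter (fun h => u ∈ h)).card = 2 := hd
      rw [hdd]
      norm_num
    have hN3 : ∀ u ∈ R, hdeg E u = 2 → 3 ≤ (nbr E u).card := by
      intro u hu hd
      have hd2 : 1 < (E.filter (fun h => u ∈ h)).card := by
        have hdd : (E.filter (fun h => u ∈ h)).card = 2 := hd
        omega
      obtain ⟨h₁, hh₁, h₂, hh₂, h12⟩ := Finset.one_lt_card.1 hd2
      obtain ⟨h₁E, uh₁⟩ := Finset.mem_filter.1 hh₁
      obtain ⟨h₂E, uh₂⟩ := Finset.mem_filter.1 hh₂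
      have e1 := hedge3 u hu hd h₁ h₁E uh₁
      have e2 := hedge3 u hu hd h₂ h₂E uh₂
      have hN := nbr_card_ge_two_edges E h₁E h₂E h12 uh₁ uh₂ (by omega)
      omega
    have hf3 : ∀ u ∈ R, hdeg E u = 1 → (f u).card = 3 := by
      intro u hu hd
      have h2 := hfcard2 u hu
      have h3 := hcardle _ (hfE u hu)
      rcases Nat.lt_or_ge (f u).card 3 with hlt | hge
      · exfalso
        have hcard2 : (f u).card = 2 := by omega
        obtain ⟨a, ha, b, hb, hab⟩ := Finset.one_lt_card.1 hr2
        have hother : ∃ u' ∈ R, u' ≠ u := by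
          by_cases hau : a = u
          · exact ⟨b, hb, fun h => hab (by rw [hau, h])⟩
          · exact ⟨a, ha, hau⟩
        obtain ⟨u', hu', hne'⟩ := hother
        obtain ⟨hsh, hge', hle'⟩ := hpairs u' hu' u hu hne'
        have hsu := singleton_not_mem hk hcardle hne (hRprop u' hu').1
        have hsu' := singleton_not_mem hk hcardle hne (hRprop u hu).1
        have hdegsum : hdeg E u' + hdeg E u = k := by
          have := hd12 u' hu'
          omega
        exact sharing hk hn hne hcardle hdet hne' hsu hsu' hdegsum hsh
          (hRprop u' hu').1 (hRprop u hu).1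
          (hfE u' hu') (hfE u hu) (hfu u' hu') (hfu u hu) (hfw u' hu') (hfw u hu)
          (Ne.symm (hwne u' hu')) (Ne.symm (hwne u hu))
          (Or.inr ⟨f u, hfE u hu, Or.inr (hfu u hu), hcard2⟩)
      · omega
    have hsig13 : ∀ u ∈ R, hdeg E u = 1 → sig E u = 1/3 := by
      intro u hu hd
      have hdd : (E.filter (fun h => u ∈ h)).card = 1 := hd
      obtain ⟨a, ha⟩ := Finset.card_eq_one.1 hdd
      have hfa : f u = a := by
        have h1 : f u ∈ E.filter (fun h => u ∈ h) := Finset.mem_filter.2 ⟨hfE u hu, hfu u hu⟩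
        rw [ha] at h1; exact Finset.mem_singleton.1 h1
      unfold sig
      rw [ha, Finset.sum_singleton, ← hfa, hf3 u hu hd]
      norm_num
    have hN2 : ∀ u ∈ R, hdeg E u = 1 → 2 ≤ (nbr E u).card := by
      intro u hu hd
      have h1 := nbr_card_ge E (hfE u hu) (hfu u hu)
      have h2 := hf3 u hu hd
      omega
    set R1 := R.filter (fun u => hdeg E u = 1) with hR1
    set R2 := R.filter (fun u => ¬ hdeg E u = 1) with hR2
    have hsplit : ∑ u ∈ R1, (tq k - sig E u)/((nbr E u).card:ℚ) +
        ∑ u ∈ R2, (tq k - sig E u)/((nbr E u).card:ℚ) =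
        ∑ u ∈ R, (tq k - sig E u)/((nbr E u).card:ℚ) :=
      Finset.sum_filter_add_sum_filter_not R _ _
    have hcardsplit : R1.card + R2.card = R.card :=
      Finset.card_filter_add_card_filter_not _
    have hR1card : R1.card ≤ 1 := by
      by_contra hcon
      push_neg at hcon
      obtain ⟨a, ha, b, hb, hab⟩ := Finset.one_lt_card.1 hcon
      obtain ⟨haR, had⟩ := Finset.mem_filter.1 ha
      obtain ⟨hbR, hbd⟩ := Finset.mem_filter.1 hb
      have := (hpairs a haR b hbR hab).2.1
      omega
    have hb1 : ∑ u ∈ R1, (tq k - sig E u)/((nbr E u).card:ℚ) ≤ (R1.card:ℚ)*(1/4) := by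
      have hterm : ∀ u ∈ R1, (tq k - sig E u)/((nbr E u).card:ℚ) ≤ 1/4 := by
        intro u hu
        obtain ⟨huR, hud⟩ := Finset.mem_filter.1 hu
        have h1 : tq k - sig E u = 1/2 := by
          rw [hsig13 u huR hud, htq3]; norm_num
        have h2 : (2:ℚ) ≤ ((nbr E u).card:ℚ) := by exact_mod_cast hN2 u huR hud
        rw [h1]
        rw [div_le_div_iff₀ (by linarith) (by norm_num)]
        linarith
      calc _ ≤ ∑ _u ∈ R1, (1:ℚ)/4 := Finset.sum_le_sum hterm
        _ = _ := by rw [Finset.sum_const, nsmul_eq_mul]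
    have hb2 : ∑ u ∈ R2, (tq k - sig E u)/((nbr E u).card:ℚ) ≤ (R2.card:ℚ)*(1/18) := by
      have hterm : ∀ u ∈ R2, (tq k - sig E u)/((nbr E u).card:ℚ) ≤ 1/18 := by
        intro u hu
        obtain ⟨huR, hud⟩ := Finset.mem_filter.1 hu
        have hud2 : hdeg E u = 2 := by
          have := hd12 u huR
          tauto
        have h1 : tq k - sig E u = 1/6 := by
          rw [hsig23 u huR hud2, htq3]; norm_num
        have h2 : (3:ℚ) ≤ ((nbr E u).card:ℚ) := by exact_mod_cast hN3 u huR hud2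
        rw [h1]
        rw [div_le_div_iff₀ (by linarith) (by norm_num)]
        linarith
      calc _ ≤ ∑ _u ∈ R2, (1:ℚ)/18 := Finset.sum_le_sum hterm
        _ = _ := by rw [Finset.sum_const, nsmul_eq_mul]
    have hfall3 : ∀ u ∈ R, (f u).card = 3 := by
      intro u hu
      rcases hd12 u hu with hd | hd
      · exact hf3 u hu hd
      · exact hedge3 u hu hd (f u) (hfE u hu) (hfu u hu)
    have hQ3 : (R.card:ℚ)*(1/3) ≤ sig E w := by
      have he : ∑ u ∈ R, (1:ℚ)/((f u).card:ℚ) = (R.card:ℚ)*(1/3) := by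
        have hcongr : ∀ u ∈ R, (1:ℚ)/((f u).card:ℚ) = 1/((3:ℕ):ℚ) := by
          intro u hu
          rw [hfall3 u hu]
        rw [Finset.sum_congr rfl hcongr, Finset.sum_const, nsmul_eq_mul]
        norm_num
      linarith [hQw]
    rcases Finset.eq_empty_or_nonempty R1 with hR1e | hR1ne
    · -- all of R has degree 2
      have hr2card : R2.card = R.card := by
        rw [hR1e] at hcardsplit
        simpa using hcardsplit
      obtain ⟨u₀, hu₀⟩ := Finset.card_pos.1 (by omega : 0 < R.card)
      have hd0 : hdeg E u₀ = 2 := by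
        rcases hd12 u₀ hu₀ with hd | hd
        · exfalso
          have : u₀ ∈ R1 := Finset.mem_filter.2 ⟨hu₀, hd⟩
          rw [hR1e] at this
          exact absurd this (Finset.notMem_empty _)
        · exact hd
      have hs0 : (1:ℚ)/6 ≤ sig E w - tq k := by
        have h1 := hsurp u₀ hu₀
        rw [hsig23 u₀ hu₀ hd0, htq3] at h1
        linarith [htq3]
      rcases le_or_gt R.card 3 with hr3 | hr4
      · have hr3' : ((R.card:ℚ)) ≤ 3 := by exact_mod_cast hr3
        have := hb1
        rw [hR1e, Finset.sum_empty] at this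
        have hsum0 : ∑ u ∈ R1, (tq k - sig E u)/((nbr E u).card:ℚ) = 0 := by
          rw [hR1e, Finset.sum_empty]
        have hr2' : ((R2.card:ℚ)) = (R.card:ℚ) := by exact_mod_cast hr2card
        rw [← hsplit, hsum0, zero_add]
        have : (R2.card:ℚ)*(1/18) ≤ 1/6 := by
          rw [hr2']
          linarith
        linarith
      · have hr4' : (4:ℚ) ≤ (R.card:ℚ) := by exact_mod_cast hr4
        have hsum0 : ∑ u ∈ R1, (tq k - sig E u)/((nbr E u).card:ℚ) = 0 := by
          rw [hR1e, Finset.sum_empty]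
        have hr2' : ((R2.card:ℚ)) = (R.card:ℚ) := by exact_mod_cast hr2card
        rw [← hsplit, hsum0, zero_add]
        have h1 : (R2.card:ℚ)*(1/18) ≤ (R.card:ℚ)*(1/3) - 5/6 := by
          rw [hr2']
          nlinarith
        linarith [hb2, hQ3, htq3]
    · -- R1 is a singleton {u₁}
      obtain ⟨u₁, hu₁⟩ := hR1ne
      obtain ⟨hu₁R, hu₁d⟩ := Finset.mem_filter.1 hu₁
      have hR1one : R1.card = 1 := by
        have := Finset.card_pos.2 ⟨u₁, hu₁⟩
        omega
      have hs1 : (1:ℚ)/2 ≤ sig E w - tq k := by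
        have h1 := hsurp u₁ hu₁R
        rw [hsig13 u₁ hu₁R hu₁d, htq3] at h1
        linarith [htq3]
      have hr2card : R2.card = R.card - 1 := by omega
      have hr2' : ((R2.card:ℚ)) = (R.card:ℚ) - 1 := by
        have h1 : 1 ≤ R.card := by omega
        rw [hr2card, Nat.cast_sub h1]
        norm_num
      have hR1' : ((R1.card:ℚ)) = 1 := by rw [hR1one]; norm_num
      rcases le_or_gt R.card 5 with hr5 | hr6
      · have hr5' : ((R.card:ℚ)) ≤ 5 := by exact_mod_cast hr5
        rw [← hsplit]
        have := hb1
        rw [hR1'] at this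
        have h2 := hb2
        rw [hr2'] at h2
        linarith
      · have hr6' : (6:ℚ) ≤ (R.card:ℚ) := by exact_mod_cast hr6
        rw [← hsplit]
        have h1 := hb1
        rw [hR1'] at h1
        have h2 := hb2
        rw [hr2'] at h2
        linarith [hQ3, htq3, hr6']


theorem main_bound (hk : 3 ≤ k) (hn : 3 * k ≤ n) {E : Finset (Finset (Fin n))}
    (hne : ∀ h ∈ E, h.Nonempty) (hcardle : ∀ h ∈ E, h.card ≤ k)
    (hdet : Detectable k k E) :
    (n : ℚ) / 2 + (n : ℚ) / k ≤ E.card := by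
  have hk0 : 0 < k := by omega
  have hkQ : (0:ℚ) < k := by exact_mod_cast hk0
  have hnQ : (0:ℚ) ≤ n := by positivity
  have hgoal_eq : (n : ℚ) / 2 + (n : ℚ) / k = (n:ℚ) * tq k := by
    unfold tq; field_simp
  rw [hgoal_eq, ← sum_sig E hne]
  set D := Finset.univ.filter (fun v : Fin n => sig E v < tq k) with hD
  by_cases hdeg0 : ∃ u ∈ D, hdeg E u = 0
  · -- a degree-zero deficient vertex : everyone else has sig ≥ 1
    obtain ⟨u₀, hu₀D, hd0⟩ := hdeg0
    have hu₀sig : sig E u₀ < tq k := (Finset.mem_filter.1 hu₀D).2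
    have hall : ∀ x : Fin n, x ≠ u₀ → (1:ℚ) ≤ sig E x := by
      intro x hx
      have hdposx : 1 ≤ hdeg E x → (1:ℚ) ≤ (hdeg E x : ℚ) := fun h => by exact_mod_cast h
      by_cases hsx : ({x} : Finset (Fin n)) ∈ E
      · have hs := sig_ge_edge hk0 hcardle hne hsx (Finset.mem_singleton_self x)
        rw [Finset.card_singleton] at hs
        norm_num at hs
        have hd1 : 1 ≤ hdeg E x := by
          have h1 : ({x}:Finset (Fin n)) ∈ E.filter (fun h => x ∈ h) :=
            Finset.mem_filter.2 ⟨hsx, Finset.mem_singleton_self x⟩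
          have := Finset.card_pos.2 ⟨_, h1⟩
          unfold hdeg; omega
        have h0le : (0:ℚ) ≤ ((hdeg E x:ℚ) - 1)/k := by
          apply div_nonneg _ (le_of_lt hkQ)
          have := hdposx hd1
          linarith
        linarith
      · have hsu₀ : ({u₀} : Finset (Fin n)) ∉ E := singleton_not_mem hk hcardle hne hu₀sig
        have hC := pair_lemma hk hn hcardle hdet (Ne.symm hx) (cores_nonempty hsu₀ hsx)
        have h2 := cores_card_le_sum E u₀ x
        have h3 : (E.filter (fun h => u₀ ∈ h ∧ x ∉ h)).card = 0 := by
          have hsub : E.filter (fun h => u₀ ∈ h ∧ x ∉ h) ⊆ E.filter (fun h => u₀ ∈ h) := by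
            intro h hh
            obtain ⟨hhE, h1, _⟩ := Finset.mem_filter.1 hh
            exact Finset.mem_filter.2 ⟨hhE, h1⟩
          have := Finset.card_le_card hsub
          unfold hdeg at hd0
          omega
        have h4 : (E.filter (fun h => x ∈ h ∧ u₀ ∉ h)).card ≤ hdeg E x := by
          apply Finset.card_le_card
          intro h hh
          obtain ⟨hhE, h1, _⟩ := Finset.mem_filter.1 hh
          exact Finset.mem_filter.2 ⟨hhE, h1⟩
        have hdx : k ≤ hdeg E x := by omega
        have hs := sig_ge_deg hk0 hcardle hne x
        have h5 : (1:ℚ) ≤ (hdeg E x:ℚ)/k := by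
          rw [le_div_iff₀ hkQ]
          have : ((k:ℚ)) ≤ (hdeg E x : ℚ) := by exact_mod_cast hdx
          linarith
        linarith
    have hsum : (n:ℚ) - 1 ≤ ∑ v, sig E v := by
      have h1 : ∑ v ∈ Finset.univ.erase u₀, sig E v ≤ ∑ v, sig E v := by
        apply Finset.sum_le_sum_of_subset_of_nonneg (Finset.erase_subset _ _)
        intro v _ _
        apply Finset.sum_nonneg
        intro h _
        positivity
      have h2 : ∑ v ∈ Finset.univ.erase u₀, (1:ℚ) ≤ ∑ v ∈ Finset.univ.erase u₀, sig E v := by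
        apply Finset.sum_le_sum
        intro v hv
        exact hall v (Finset.mem_erase.1 hv).1
      have h3 : ∑ v ∈ Finset.univ.erase u₀, (1:ℚ) = (n:ℚ) - 1 := by
        rw [Finset.sum_const, Finset.card_erase_of_mem (Finset.mem_univ _)]
        simp only [Finset.card_univ, Fintype.card_fin, nsmul_eq_mul, mul_one]
        have hn1 : 1 ≤ n := by omega
        rw [Nat.cast_sub hn1]
        norm_num
      linarith
    -- n * tq k ≤ n - 1
    have hfin : (n:ℚ) * tq k ≤ (n:ℚ) - 1 := by
      have h56 : tq k ≤ 5/6 := by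
        unfold tq
        rw [div_le_div_iff₀ (by positivity) (by norm_num)]
        have h3 : (3:ℚ) ≤ k := by exact_mod_cast hk
        nlinarith
      have hn9 : (9:ℚ) ≤ n := by
        have h9 : 9 ≤ n := by omega
        exact_mod_cast h9
      nlinarith
    linarith
  · push_neg at hdeg0
    have hNne : ∀ u ∈ D, 0 < ((nbr E u).card : ℚ) := by
      intro u hu
      have hd : hdeg E u ≠ 0 := hdeg0 u hu
      have hpos : 0 < (E.filter (fun h => u ∈ h)).card := by
        unfold hdeg at hd; omega
      obtain ⟨h, hh⟩ := Finset.card_pos.1 hpos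
      obtain ⟨hhE, huh⟩ := Finset.mem_filter.1 hh
      have husig : sig E u < tq k := (Finset.mem_filter.1 hu).2
      have hsu : ({u} : Finset (Fin n)) ∉ E := singleton_not_mem hk hcardle hne husig
      have hcard2 : 2 ≤ h.card := by
        rcases Nat.lt_or_ge h.card 2 with hlt | hge
        · exfalso
          have hc1 : h.card = 1 := by
            have := Finset.card_pos.2 ⟨u, huh⟩
            omega
          obtain ⟨a, ha⟩ := Finset.card_eq_one.1 hc1
          have : u ∈ ({a} : Finset (Fin n)) := ha ▸ huh
          have hua : u = a := Finset.mem_singleton.1 this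
          rw [ha, ← hua] at hhE
          exact hsu hhE
        · exact hge
      have := nbr_nonempty hhE huh hcard2
      exact_mod_cast this
    have hND : ∀ u ∈ D, ∀ x, x ∈ nbr E u → ¬ sig E x < tq k := by
      intro u hu x hx hxd
      obtain ⟨hxu, h, hhE, huh, hxh⟩ := mem_nbr.1 hx
      have husig : sig E u < tq k := (Finset.mem_filter.1 hu).2
      have := neighbor_surplus hk hn hcardle hne hdet (Ne.symm hxu) husig hhE huh hxh
      linarith
    -- double counting
    set A := Finset.univ.filter (fun w : Fin n => ¬ sig E w < tq k) with hA
    have hch : ∑ w ∈ A, (∑ u ∈ D.filter (fun u => w ∈ nbr E u),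
        (tq k - sig E u)/((nbr E u).card:ℚ)) = ∑ u ∈ D, (tq k - sig E u) := by
      have step1 : ∀ w, ∑ u ∈ D.filter (fun u => w ∈ nbr E u),
          (tq k - sig E u)/((nbr E u).card:ℚ) =
          ∑ u ∈ D, if w ∈ nbr E u then (tq k - sig E u)/((nbr E u).card:ℚ) else 0 := by
        intro w; rw [Finset.sum_filter]
      simp_rw [step1]
      rw [Finset.sum_comm]
      apply Finset.sum_congr rfl
      intro u hu
      rw [← Finset.sum_filter]
      have hAfil : A.filter (fun w => w ∈ nbr E u) = nbr E u := by
        ext w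
        simp only [hA, Finset.mem_filter, Finset.mem_univ, true_and]
        constructor
        · rintro ⟨_, h2⟩; exact h2
        · intro h2; exact ⟨hND u hu w h2, h2⟩
      rw [hAfil, Finset.sum_const, nsmul_eq_mul]
      rw [mul_div_cancel₀]
      exact ne_of_gt (hNne u hu)
    -- final assembly
    have hsplit : ∑ v ∈ D, sig E v + ∑ v ∈ A, sig E v = ∑ v, sig E v := by
      rw [hD, hA]
      exact Finset.sum_filter_add_sum_filter_not _ _ _
    have hperw : ∀ w ∈ A, tq k + ∑ u ∈ D.filter (fun u => w ∈ nbr E u),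
        (tq k - sig E u)/((nbr E u).card:ℚ) ≤ sig E w := by
      intro w hw
      exact perw hk hn hne hcardle hdet (Finset.mem_filter.1 hw).2
    have hAsum : (A.card:ℚ) * tq k + ∑ u ∈ D, (tq k - sig E u) ≤ ∑ v ∈ A, sig E v := by
      have h1 : ∑ w ∈ A, (tq k + ∑ u ∈ D.filter (fun u => w ∈ nbr E u),
          (tq k - sig E u)/((nbr E u).card:ℚ)) ≤ ∑ v ∈ A, sig E v :=
        Finset.sum_le_sum hperw
      rw [Finset.sum_add_distrib, Finset.sum_const, nsmul_eq_mul, hch] at h1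
      exact h1
    have hDsum : ∑ v ∈ D, sig E v + ∑ u ∈ D, (tq k - sig E u) = (D.card:ℚ) * tq k := by
      rw [← Finset.sum_add_distrib]
      have : ∀ u ∈ D, sig E u + (tq k - sig E u) = tq k := by intro u _; ring
      rw [Finset.sum_congr rfl this, Finset.sum_const, nsmul_eq_mul]
    have hcards : (D.card:ℚ) + (A.card:ℚ) = (n:ℚ) := by
      have h1 : D.card + A.card = n := by
        rw [hD, hA]
        rw [Finset.card_filter_add_card_filter_not]
        simp [Finset.card_univ]
      exact_mod_cast h1
    have : (n:ℚ) * tq k = (D.card:ℚ)*tq k + (A.card:ℚ)*tq k := by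
      rw [← add_mul, hcards]
    linarith

end Stmt5

theorem stmt_5 (k n : ℕ) (hk : 3 ≤ k) (hk4 : k ≠ 4) (hn : 3 * k ≤ n)
    (hn3 : k = 3 → 18 ≤ n)
    (E : Finset (Finset (Fin n)))
    (hne : ∀ h ∈ E, h.Nonempty) (hcardle : ∀ h ∈ E, h.card ≤ k)
    (hdet : Detectable k k E) :
    (n : ℚ) / 2 + (n : ℚ) / k ≤ E.card :=
  Stmt5.main_bound hk hn hne hcardle hdet
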